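/- arXiv:2508.14639 — 4 statements merged into one kernel-verified Lean document; each statement's English description precedes it below -/
import Mathlib

section
/- Fix n ≥ 1. For every permutation t of Fin (n+1) and every i ∈ Fin (n+1), sign(φ_i(t)) = (−1)^{i + t(i)} · sign(t), where i and t(i) are read as natural numbers and sign denotes the sign of a permutation. -/
/-- `sign (φ_i t) = (-1)^(i + t i) * sign t`, where `φ_i t` is the permutation of `Fin n`
characterized by `succAbove (t i) ∘ φ_i t = t ∘ succAbove i`. -/
theorem stmt2 (n : ℕ) (hn : 1 ≤ n)
    (φ : Fin (n + 1) → Equiv.Perm (Fin (n + 1)) → Equiv.Perm (Fin n))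
    (hφ : ∀ (i : Fin (n + 1)) (t : Equiv.Perm (Fin (n + 1))),
      (Fin.succAbove (t i)) ∘ (φ i t : Fin n → Fin n) =
        (t : Fin (n + 1) → Fin (n + 1)) ∘ (Fin.succAbove i))
    (t : Equiv.Perm (Fin (n + 1))) (i : Fin (n + 1)) :
    Equiv.Perm.sign (φ i t) = (-1) ^ ((i : ℕ) + ((t i : Fin (n + 1)) : ℕ)) * Equiv.Perm.sign t := by
  have key : ∀ j : Fin n, t (i.succAbove j) = (t i).succAbove (φ i t j) := fun j =>
    (congrFun (hφ i t) j).symm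
  set P : Equiv.Perm (Fin (n + 1)) :=
    (Fin.cycleRange (t i)) * t * (Fin.cycleRange i)⁻¹ with hP
  have hinv0 : (Fin.cycleRange i)⁻¹ 0 = i := by
    rw [Equiv.Perm.inv_eq_iff_eq, Fin.cycleRange_self]
  have hinvs : ∀ j : Fin n, (Fin.cycleRange i)⁻¹ j.succ = i.succAbove j := fun j =>
    Fin.cycleRange_symm_succ i j
  have hPeq : P = Equiv.Perm.decomposeFin.symm (0, φ i t) := by
    ext x
    refine Fin.cases ?_ (fun j => ?_) x
    · simp [hP, Equiv.Perm.mul_apply, hinv0, Fin.cycleRange_self,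
        Equiv.Perm.decomposeFin_symm_apply_zero]
    · simp [hP, Equiv.Perm.mul_apply, hinvs, key, Fin.cycleRange_succAbove,
        Equiv.Perm.decomposeFin_symm_apply_succ]
  have hsign := congrArg Equiv.Perm.sign hPeq
  simp [hP, Fin.sign_cycleRange, Equiv.Perm.decomposeFin.symm_sign] at hsign
  rw [← hsign, pow_add]
  simp [mul_comm, mul_assoc, mul_left_comm]
end

section
/- Let R be a field of characteristic 0 and X a symmetric simplicial R-module. For all 0 < k ≤ n, ∂_n ∘ p_n^(k) = p_{n−1}^(k−1) ∘ ∂_n^{≤k} + p_{n−1}^(k) ∘ ∂_n^{>k} as R-linear maps X_n → X_{n−1}. In particular ∂_n ∘ p_n^(n) = p_{n−1}^(n−1) ∘ ∂_n for all n, so the family p_X := (p_n^(n)) is a chain map C_*X → C_*X. -/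
set_option maxHeartbeats 1000000
set_option linter.unusedSectionVars false

open CategoryTheory Opposite
noncomputable section
variable {R : Type} [Field R] [CharZero R]

/-- The object `Fin m` in the category of finite types. -/
abbrev fobj (m : ℕ) : FintypeCat := FintypeCat.of (Fin m)

variable (X : FintypeCatᵒᵖ ⥤ ModuleCat R)

/-- The `R`-module `X(Fin m)`; for `m = n+1` this is the module `X_n` of `n`-simplices. -/
abbrev MM (m : ℕ) := X.obj (op (fobj m))

/-- `X` applied (contravariantly) to a map `f : Fin m → Fin k`. -/
def act {m k : ℕ} (f : Fin m → Fin k) : MM X k →ₗ[R] MM X m :=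
  (X.map (Quiver.Hom.op (show fobj m ⟶ fobj k from FintypeCat.homMk f))).hom

/-- The face map `d_i : X_n → X_{n-1}`, i.e. `X` applied to `Fin.succAbove i`. -/
def face (n : ℕ) (i : Fin (n + 1)) : MM X (n + 1) →ₗ[R] MM X n :=
  act X (Fin.succAbove i)

/-- The alternating-sum differential `∂_n : X_n → X_{n-1}`. -/
def del (n : ℕ) : MM X (n + 1) →ₗ[R] MM X n :=
  ∑ i : Fin (n + 1), ((-1 : R) ^ (i : ℕ)) • face X n i

/-- The action of a permutation `t` on `X_n`, `t • x := X(t)(x)`. -/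
def pact (m : ℕ) (t : Equiv.Perm (Fin m)) : MM X m →ₗ[R] MM X m :=
  act X (t : Fin m → Fin m)

/-- The sign of a permutation, as an element of `R`. -/
def sgnR (R : Type) [Field R] {m : ℕ} (t : Equiv.Perm (Fin m)) : R := ((Equiv.Perm.sign t : ℤ) : R)

/-- The subgroup `S_{[k]}` of permutations of `Fin m` fixing every `j > k`, as a finset. -/
def Sk (m k : ℕ) : Finset (Equiv.Perm (Fin m)) :=
  Finset.univ.filter (fun t => ∀ j : Fin m, k < (j : ℕ) → t j = j)

/-- The map `p_{m-1}^{(k)} : X(Fin m) → X(Fin m)`,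
`x ↦ (1/(k+1)!) ∑_{t ∈ S_{[k]}} sgn(t) • (t • x)`. -/
def pmap (m k : ℕ) : MM X m →ₗ[R] MM X m :=
  ((Nat.factorial (k + 1) : R)⁻¹) • ∑ t ∈ Sk m k, sgnR R t • pact X m t

/-- Truncated differential `∂_n^{≤ k} = ∑_{i=0}^k (-1)^i d_i`. -/
def delLe (n k : ℕ) : MM X (n + 1) →ₗ[R] MM X n :=
  ∑ i ∈ Finset.univ.filter (fun i : Fin (n + 1) => (i : ℕ) ≤ k),
    ((-1 : R) ^ (i : ℕ)) • face X n i

/-- Truncated differential `∂_n^{> k} = ∑_{i=k+1}^n (-1)^i d_i`. -/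
def delGt (n k : ℕ) : MM X (n + 1) →ₗ[R] MM X n :=
  ∑ i ∈ Finset.univ.filter (fun i : Fin (n + 1) => k < (i : ℕ)),
    ((-1 : R) ^ (i : ℕ)) • face X n i

/-- The full projection `p_{m-1}^{(m-1)} : X(Fin m) → X(Fin m)` (averaging over all of
`Perm (Fin m)` with signs). -/
def pfull (m : ℕ) : MM X m →ₗ[R] MM X m :=
  ((Nat.factorial m : R)⁻¹) • ∑ t : Equiv.Perm (Fin m), sgnR R t • pact X m t

end


namespace SProofAux
open Equiv Fin
variable {n : ℕ}
variable {n : ℕ}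

def Dp (i : Fin (n+1)) (t : Perm (Fin (n+1))) : Perm (Fin n) :=
  (Equiv.Perm.decomposeFin ((t i).cycleRange * t * (i.cycleRange)⁻¹)).2

def Tp (i j : Fin (n+1)) (e : Perm (Fin n)) : Perm (Fin (n+1)) :=
  (j.cycleRange)⁻¹ * (Equiv.Perm.decomposeFin.symm (0, e)) * i.cycleRange

lemma u_zero (i : Fin (n+1)) (t : Perm (Fin (n+1))) :
    ((t i).cycleRange * t * (i.cycleRange)⁻¹) 0 = 0 := by
  simp [Equiv.Perm.mul_apply, Equiv.Perm.inv_def]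

lemma decomposeFin_fst (u : Perm (Fin (n+1))) :
    (Equiv.Perm.decomposeFin u).1 = u 0 := by
  conv_rhs => rw [← Equiv.Perm.decomposeFin.symm_apply_apply u,
    ← Prod.mk.eta (p := Equiv.Perm.decomposeFin u)]
  rw [Equiv.Perm.decomposeFin_symm_apply_zero]

lemma usymm (i : Fin (n+1)) (t : Perm (Fin (n+1))) :
    (t i).cycleRange * t * (i.cycleRange)⁻¹ = Equiv.Perm.decomposeFin.symm (0, Dp i t) := by
  set u := (t i).cycleRange * t * (i.cycleRange)⁻¹ with hu
  conv_lhs => rw [← Equiv.Perm.decomposeFin.symm_apply_apply u]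
  congr 1
  rw [← Prod.mk.eta (p := Equiv.Perm.decomposeFin u)]
  have h1 : (Equiv.Perm.decomposeFin u).1 = 0 := by rw [decomposeFin_fst]; exact u_zero i t
  rw [h1]; rfl

lemma G1 (i : Fin (n+1)) (t : Perm (Fin (n+1))) (m : Fin n) :
    t (i.succAbove m) = (t i).succAbove (Dp i t m) := by
  have h := congrArg (fun σ : Perm (Fin (n+1)) => σ m.succ) (usymm i t)
  simp only [Equiv.Perm.mul_apply, Equiv.Perm.decomposeFin_symm_apply_succ,
    Equiv.swap_self, Equiv.refl_apply] at h
  have h2 : (i.cycleRange)⁻¹ m.succ = i.succAbove m := by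
    rw [Equiv.Perm.inv_def, Fin.cycleRange_symm_succ]
  rw [h2] at h
  have := congrArg (fun z => ((t i).cycleRange).symm z) h
  simpa using this

lemma sign_Dp (i : Fin (n+1)) (t : Perm (Fin (n+1))) :
    Equiv.Perm.sign (Dp i t) = (-1 : ℤˣ)^((i : ℕ) + ((t i : ℕ))) * Equiv.Perm.sign t := by
  have h := congrArg Equiv.Perm.sign (usymm i t)
  rw [Equiv.Perm.decomposeFin.symm_sign, if_pos rfl, one_mul] at h
  simp only [map_mul, map_inv, Fin.sign_cycleRange] at h
  rw [← h, pow_add]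
  have h2 : ((-1:ℤˣ)^(i:ℕ))⁻¹ = (-1:ℤˣ)^(i:ℕ) := by
    rw [← inv_pow]; norm_num
  rw [h2]
  simp [mul_comm, mul_assoc, mul_left_comm]

lemma Tp_apply_i (i j : Fin (n+1)) (e : Perm (Fin n)) : Tp i j e i = j := by
  simp [Tp, Equiv.Perm.mul_apply, Equiv.Perm.inv_def,
    Equiv.Perm.decomposeFin_symm_apply_zero]

lemma Dp_Tp (i j : Fin (n+1)) (e : Perm (Fin n)) : Dp i (Tp i j e) = e := by
  unfold Dp
  rw [Tp_apply_i]
  have : j.cycleRange * Tp i j e * (i.cycleRange)⁻¹ = Equiv.Perm.decomposeFin.symm (0, e) := by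
    unfold Tp; group
  rw [this, Equiv.apply_symm_apply]

lemma Tp_Dp (i : Fin (n+1)) (t : Perm (Fin (n+1))) : Tp i (t i) (Dp i t) = t := by
  unfold Tp
  rw [← usymm]
  group


lemma step_le {k : ℕ} {t : Perm (Fin (n+1))} (ht : ∀ j : Fin (n+1), k < (j:ℕ) → t j = j)
    {i : Fin (n+1)} (hi : (i:ℕ) ≤ k) : ((t i : Fin (n+1)) : ℕ) ≤ k := by
  by_contra h
  push_neg at h
  have h2 := ht (t i) h
  have h3 := t.injective h2
  rw [h3] at h
  omega

lemma Dp_fix {i : Fin (n+1)} {t : Perm (Fin (n+1))} {m : Fin n}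
    (h1 : t (i.succAbove m) = i.succAbove m) (h2 : (t i).succAbove m = i.succAbove m) :
    Dp i t m = m := by
  have h := G1 i t m
  rw [h1, ← h2] at h
  exact (Fin.succAbove_right_injective h.symm)

lemma mem_forward_le {k : ℕ} (hk : 0 < k) {t : Perm (Fin (n+1))}
    (ht : ∀ j : Fin (n+1), k < (j:ℕ) → t j = j) {i : Fin (n+1)} (hi : (i:ℕ) ≤ k)
    (m : Fin n) (hm : k - 1 < (m:ℕ)) : Dp i t m = m := by
  have hkm : k ≤ (m:ℕ) := by omega
  have hs : i.succAbove m = m.succ := by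
    apply Fin.succAbove_of_le_castSucc
    rw [Fin.le_def, Fin.coe_castSucc]; omega
  have hs2 : (t i).succAbove m = m.succ := by
    apply Fin.succAbove_of_le_castSucc
    rw [Fin.le_def, Fin.coe_castSucc]
    have := step_le ht hi; omega
  apply Dp_fix
  · rw [hs]; exact ht m.succ (by rw [Fin.val_succ]; omega)
  · rw [hs2, hs]

lemma mem_forward_gt {k : ℕ} {t : Perm (Fin (n+1))}
    (ht : ∀ j : Fin (n+1), k < (j:ℕ) → t j = j) {i : Fin (n+1)} (hi : k < (i:ℕ))
    (m : Fin n) (hm : k < (m:ℕ)) : Dp i t m = m := by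
  have hti : t i = i := ht i hi
  have hval : k < ((i.succAbove m : Fin (n+1)) : ℕ) := by
    rcases lt_or_ge ((m.castSucc : Fin (n+1)):ℕ) ((i:ℕ)) with h | h
    · rw [Fin.succAbove_of_castSucc_lt _ _ (by rwa [Fin.lt_def])]
      rw [Fin.coe_castSucc] at *; omega
    · rw [Fin.succAbove_of_le_castSucc _ _ (by rwa [Fin.le_def])]
      rw [Fin.val_succ]; omega
  apply Dp_fix
  · exact ht _ hval
  · rw [hti]

lemma mem_backward_le {k : ℕ} (hk : 0 < k) {i j : Fin (n+1)} (hi : (i:ℕ) ≤ k) (hj : (j:ℕ) ≤ k)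
    {e : Perm (Fin n)} (he : ∀ m : Fin n, k - 1 < (m:ℕ) → e m = m)
    (j' : Fin (n+1)) (hj' : k < (j':ℕ)) : Tp i j e j' = j' := by
  have hne : j' ≠ i := by intro h; rw [h] at hj'; omega
  obtain ⟨m, hm⟩ := Fin.exists_succAbove_eq hne
  have hsucc : m.succ = j' := by
    rcases lt_or_ge ((m.castSucc : Fin (n+1)):ℕ) ((i:ℕ)) with h | h
    · exfalso
      rw [Fin.succAbove_of_castSucc_lt _ _ (by rwa [Fin.lt_def])] at hm
      have : ((m.castSucc : Fin (n+1)):ℕ) = (j':ℕ) := by rw [hm]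
      rw [Fin.coe_castSucc] at *; omega
    · rw [Fin.succAbove_of_le_castSucc _ _ (by rwa [Fin.le_def])] at hm
      exact hm
  have hkm : k ≤ (m:ℕ) := by
    have : ((m.succ : Fin (n+1)):ℕ) = (j':ℕ) := by rw [hsucc]
    rw [Fin.val_succ] at this; omega
  have key := G1 i (Tp i j e) m
  rw [hm, Tp_apply_i, Dp_Tp] at key
  rw [key, he m (by omega)]
  rw [Fin.succAbove_of_le_castSucc _ _ (by rw [Fin.le_def, Fin.coe_castSucc]; omega)]
  exact hsucc

lemma mem_backward_gt {k : ℕ} {i : Fin (n+1)} (hi : k < (i:ℕ))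
    {e : Perm (Fin n)} (he : ∀ m : Fin n, k < (m:ℕ) → e m = m)
    (j' : Fin (n+1)) (hj' : k < (j':ℕ)) : Tp i i e j' = j' := by
  rcases eq_or_ne j' i with rfl | hne
  · exact Tp_apply_i _ _ _
  obtain ⟨m, hm⟩ := Fin.exists_succAbove_eq hne
  have hmk : k < (m:ℕ) := by
    rcases lt_or_ge ((m.castSucc : Fin (n+1)):ℕ) ((i:ℕ)) with h | h
    · rw [Fin.succAbove_of_castSucc_lt _ _ (by rwa [Fin.lt_def])] at hm
      have : ((m.castSucc : Fin (n+1)):ℕ) = (j':ℕ) := by rw [hm]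
      rw [Fin.coe_castSucc] at this; omega
    · rw [Fin.coe_castSucc] at h; omega
  have key := G1 i (Tp i i e) m
  rw [hm, Tp_apply_i, Dp_Tp] at key
  rw [key, he m hmk, hm]

end SProofAux

section MainAux
open Equiv Fin SProofAux
variable {R : Type} [Field R] [CharZero R] (X : FintypeCatᵒᵖ ⥤ ModuleCat R)

lemma aux_act_comp {m k l : ℕ} (f : Fin m → Fin k) (g : Fin k → Fin l) :
    (act X f).comp (act X g) = act X (g ∘ f) := by
  dsimp [act]
  show (X.map (Quiver.Hom.op (show fobj k ⟶ fobj l from FintypeCat.homMk g)) ≫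
      X.map (Quiver.Hom.op (show fobj m ⟶ fobj k from FintypeCat.homMk f))).hom = _
  rw [← X.map_comp]
  rfl

lemma aux_act_act {m k l : ℕ} (f : Fin m → Fin k) (g : Fin k → Fin l) (x : MM X l) :
    act X f (act X g x) = act X (g ∘ f) x := by
  rw [← aux_act_comp]; rfl

lemma aux_act_id {m : ℕ} : act X (id : Fin m → Fin m) = LinearMap.id := by
  dsimp [act]
  have h : (Quiver.Hom.op (show fobj m ⟶ fobj m from FintypeCat.homMk id)) = 𝟙 (op (fobj m)) := rfl
  rw [h, X.map_id]; rfl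

lemma aux_pact_one (m : ℕ) : pact X m (1 : Equiv.Perm (Fin m)) = LinearMap.id := by
  dsimp [pact]
  exact aux_act_id X

lemma aux_sgnR_Dp {n : ℕ} (i : Fin (n+1)) (t : Equiv.Perm (Fin (n+1))) :
    sgnR R (Dp i t) = (-1:R)^((i:ℕ) + ((t i : Fin (n+1)):ℕ)) * sgnR R t := by
  unfold sgnR
  rw [sign_Dp]
  push_cast
  norm_num

lemma aux_coeff_eq {n : ℕ} (i : Fin (n+1)) (t : Equiv.Perm (Fin (n+1))) :
    ((-1:R)^(((t i : Fin (n+1))):ℕ)) * sgnR R (Dp i t) = (-1:R)^((i:ℕ)) * sgnR R t := by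
  rw [aux_sgnR_Dp, pow_add]
  have h1 : ((-1:R)^(((t i : Fin (n+1))):ℕ)) * ((-1:R)^(((t i : Fin (n+1))):ℕ)) = 1 := by
    rw [← mul_pow]; norm_num
  calc ((-1:R)^(((t i : Fin (n+1))):ℕ)) * ((-1:R)^((i:ℕ)) * (-1:R)^(((t i : Fin (n+1))):ℕ) * sgnR R t)
      = (((-1:R)^(((t i : Fin (n+1))):ℕ)) * ((-1:R)^(((t i : Fin (n+1))):ℕ)))
          * ((-1:R)^((i:ℕ)) * sgnR R t) := by ring
    _ = (-1:R)^((i:ℕ)) * sgnR R t := by rw [h1, one_mul]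

lemma aux_mem_Sk {m k : ℕ} {t : Equiv.Perm (Fin m)} :
    t ∈ Sk m k ↔ ∀ j : Fin m, k < (j:ℕ) → t j = j := by
  simp [Sk]

lemma aux_inner_le {n k : ℕ} (hk : 0 < k) (i : Fin (n+1)) (hi : (i:ℕ) ≤ k) :
    ∑ t ∈ Sk (n+1) k, (((-1:R)^(i:ℕ)) * sgnR R t) • act X ((⇑t) ∘ i.succAbove)
      = ∑ p ∈ (Finset.univ.filter (fun j : Fin (n+1) => (j:ℕ) ≤ k)) ×ˢ Sk n (k-1),
          (((-1:R)^((p.1:ℕ))) * sgnR R p.2) • act X ((p.1.succAbove) ∘ ⇑p.2) := by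
  refine Finset.sum_nbij' (i := fun t => (t i, Dp i t)) (j := fun p => Tp i p.1 p.2)
    ?_ ?_ ?_ ?_ ?_
  · intro t ht
    rw [Finset.mem_product]
    constructor
    · simp only [Finset.mem_filter, Finset.mem_univ, true_and]
      exact step_le (aux_mem_Sk.mp ht) hi
    · rw [aux_mem_Sk]
      exact fun m hm => mem_forward_le hk (aux_mem_Sk.mp ht) hi m hm
  · intro p hp
    rw [Finset.mem_product] at hp
    obtain ⟨hp1, hp2⟩ := hp
    simp only [Finset.mem_filter, Finset.mem_univ, true_and] at hp1
    rw [aux_mem_Sk]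
    exact fun j' hj' => mem_backward_le hk hi hp1 (aux_mem_Sk.mp hp2) j' hj'
  · intro t _
    exact Tp_Dp i t
  · intro p _
    exact Prod.ext (Tp_apply_i i p.1 p.2) (Dp_Tp i p.1 p.2)
  · intro t _
    have hf : (⇑t) ∘ i.succAbove = ((t i).succAbove) ∘ ⇑(Dp i t) := by
      funext m; exact G1 i t m
    rw [hf, aux_coeff_eq]

lemma aux_inner_gt {n k : ℕ} (i : Fin (n+1)) (hi : k < (i:ℕ)) :
    ∑ t ∈ Sk (n+1) k, (((-1:R)^(i:ℕ)) * sgnR R t) • act X ((⇑t) ∘ i.succAbove)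
      = ∑ e ∈ Sk n k, (((-1:R)^(i:ℕ)) * sgnR R e) • act X ((i.succAbove) ∘ ⇑e) := by
  refine Finset.sum_nbij' (i := fun t => Dp i t) (j := fun e => Tp i i e) ?_ ?_ ?_ ?_ ?_
  · intro t ht
    rw [aux_mem_Sk]
    exact fun m hm => mem_forward_gt (aux_mem_Sk.mp ht) hi m hm
  · intro e he
    rw [aux_mem_Sk]
    exact fun j' hj' => mem_backward_gt hi (aux_mem_Sk.mp he) j' hj'
  · intro t ht
    have hti : t i = i := (aux_mem_Sk.mp ht) i hi
    have h := Tp_Dp i t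
    rwa [hti] at h
  · intro e _
    exact Dp_Tp i i e
  · intro t ht
    have hti : t i = i := (aux_mem_Sk.mp ht) i hi
    have hf : (⇑t) ∘ i.succAbove = (i.succAbove) ∘ ⇑(Dp i t) := by
      funext m
      exact (G1 i t m).trans (by rw [hti]; rfl)
    have hc : sgnR R (Dp i t) = sgnR R t := by
      rw [aux_sgnR_Dp, hti, ← two_mul]
      rw [pow_mul]
      norm_num
    rw [hf, hc]

lemma aux_card_filter_le (n k : ℕ) (hkn : k ≤ n) :
    (Finset.univ.filter (fun i : Fin (n+1) => (i:ℕ) ≤ k)).card = k + 1 := by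
  have himg : (Finset.univ.filter (fun i : Fin (n+1) => (i:ℕ) ≤ k))
      = Finset.image (Fin.castLE (by omega : k+1 ≤ n+1)) Finset.univ := by
    ext i
    simp only [Finset.mem_filter, Finset.mem_univ, true_and, Finset.mem_image]
    constructor
    · intro hi
      refine ⟨⟨(i:ℕ), by omega⟩, ?_⟩
      apply Fin.ext
      simp
    · rintro ⟨j, rfl⟩
      simpa using (by omega : (j:ℕ) ≤ k)
  rw [himg, Finset.card_image_of_injective _ (Fin.castLE_injective _), Finset.card_univ,
    Fintype.card_fin]

lemma aux_expand_LHS (n k : ℕ) :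
    (del X n) ∘ₗ (pmap X (n+1) k)
      = ((Nat.factorial (k+1) : R))⁻¹ •
          ∑ i : Fin (n+1), ∑ t ∈ Sk (n+1) k,
            (((-1:R)^(i:ℕ)) * sgnR R t) • act X ((⇑t) ∘ i.succAbove) := by
  apply LinearMap.ext; intro x
  simp only [del, pmap, face, pact, LinearMap.comp_apply, LinearMap.sum_apply,
    LinearMap.smul_apply, map_sum, map_smul, Finset.smul_sum, smul_smul, aux_act_act]
  rw [Finset.sum_comm]
  refine Finset.sum_congr rfl fun i _ => Finset.sum_congr rfl fun t _ => ?_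
  congr 1
  ring

lemma aux_expand_RHS1 (n k : ℕ) (hk : 0 < k) :
    (pmap X n (k-1)) ∘ₗ (delLe X n k)
      = ((Nat.factorial k : R))⁻¹ •
          ∑ j ∈ Finset.univ.filter (fun j : Fin (n+1) => (j:ℕ) ≤ k), ∑ e ∈ Sk n (k-1),
            (((-1:R)^((j:ℕ))) * sgnR R e) • act X ((j.succAbove) ∘ ⇑e) := by
  have hfact : k - 1 + 1 = k := by omega
  apply LinearMap.ext; intro x
  simp only [delLe, pmap, face, pact, hfact, LinearMap.comp_apply, LinearMap.sum_apply,
    LinearMap.smul_apply, map_sum, map_smul, Finset.smul_sum, smul_smul, aux_act_act]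
  refine Finset.sum_congr rfl fun j _ => Finset.sum_congr rfl fun e _ => ?_
  congr 1
  ring

lemma aux_expand_RHS2 (n k : ℕ) :
    (pmap X n k) ∘ₗ (delGt X n k)
      = ((Nat.factorial (k+1) : R))⁻¹ •
          ∑ j ∈ Finset.univ.filter (fun j : Fin (n+1) => k < (j:ℕ)), ∑ e ∈ Sk n k,
            (((-1:R)^((j:ℕ))) * sgnR R e) • act X ((j.succAbove) ∘ ⇑e) := by
  apply LinearMap.ext; intro x
  simp only [delGt, pmap, face, pact, LinearMap.comp_apply, LinearMap.sum_apply,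
    LinearMap.smul_apply, map_sum, map_smul, Finset.smul_sum, smul_smul, aux_act_act]
  refine Finset.sum_congr rfl fun j _ => Finset.sum_congr rfl fun e _ => ?_
  congr 1
  ring

lemma aux_part1 (n k : ℕ) (hk : 0 < k) (hkn : k ≤ n) :
    (del X n) ∘ₗ (pmap X (n + 1) k) =
      (pmap X n (k - 1)) ∘ₗ (delLe X n k) + (pmap X n k) ∘ₗ (delGt X n k) := by
  rw [aux_expand_LHS, aux_expand_RHS1 X n k hk, aux_expand_RHS2]
  rw [← Finset.sum_filter_add_sum_filter_not Finset.univ (fun i : Fin (n+1) => (i:ℕ) ≤ k)]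
  have h1 : ∑ i ∈ Finset.univ.filter (fun i : Fin (n+1) => (i:ℕ) ≤ k),
      ∑ t ∈ Sk (n+1) k, (((-1:R)^(i:ℕ)) * sgnR R t) • act X ((⇑t) ∘ i.succAbove)
      = (k+1) • ∑ p ∈ (Finset.univ.filter (fun j : Fin (n+1) => (j:ℕ) ≤ k)) ×ˢ Sk n (k-1),
          (((-1:R)^((p.1:ℕ))) * sgnR R p.2) • act X ((p.1.succAbove) ∘ ⇑p.2) := by
    rw [Finset.sum_congr rfl (fun i hi => aux_inner_le X hk i
      (by simpa using (Finset.mem_filter.mp hi).2))]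
    rw [Finset.sum_const, aux_card_filter_le n k hkn]
  have h2 : ∑ i ∈ Finset.univ.filter (fun i : Fin (n+1) => ¬ ((i:ℕ) ≤ k)),
      ∑ t ∈ Sk (n+1) k, (((-1:R)^(i:ℕ)) * sgnR R t) • act X ((⇑t) ∘ i.succAbove)
      = ∑ j ∈ Finset.univ.filter (fun j : Fin (n+1) => k < (j:ℕ)), ∑ e ∈ Sk n k,
          (((-1:R)^((j:ℕ))) * sgnR R e) • act X ((j.succAbove) ∘ ⇑e) := by
    rw [show (Finset.univ.filter (fun i : Fin (n+1) => ¬ ((i:ℕ) ≤ k)))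
        = Finset.univ.filter (fun i : Fin (n+1) => k < (i:ℕ)) by
      apply Finset.filter_congr; intro i _; simp [not_le]]
    exact Finset.sum_congr rfl (fun i hi => aux_inner_gt X i
      (by simpa using (Finset.mem_filter.mp hi).2))
  rw [h1, h2, smul_add, Finset.sum_product]
  congr 1
  rw [← Nat.cast_smul_eq_nsmul R, smul_smul]
  congr 1
  have hne : (Nat.factorial k : R) ≠ 0 :=
    Nat.cast_ne_zero.mpr (Nat.factorial_ne_zero k)
  have hne1 : ((k:R)+1) ≠ 0 := by
    have h := Nat.cast_ne_zero (R := R).mpr (Nat.succ_ne_zero k)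
    push_cast at h
    exact h
  have hfs : ((Nat.factorial (k+1) : R)) = ((k:R)+1) * (Nat.factorial k : R) := by
    rw [Nat.factorial_succ]; push_cast; ring
  rw [hfs, mul_inv]
  push_cast
  field_simp

lemma aux_pfull_small (m : ℕ) (hm : m ≤ 1) : pfull X m = LinearMap.id := by
  have hsub : Subsingleton (Fin m) := by
    interval_cases m <;> infer_instance
  have hall : ∀ t : Equiv.Perm (Fin m), t = 1 := fun t =>
    Equiv.ext fun x => Subsingleton.elim _ _
  have huniv : (Finset.univ : Finset (Equiv.Perm (Fin m))) = {1} := by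
    ext t; simp [hall t]
  unfold pfull
  rw [huniv, Finset.sum_singleton]
  have hfac : (Nat.factorial m : R) = 1 := by
    interval_cases m <;> simp [Nat.factorial]
  rw [hfac, aux_pact_one]
  have hsgn : sgnR R (1 : Equiv.Perm (Fin m)) = 1 := by
    simp [sgnR]
  rw [hsgn]
  simp

lemma aux_pmap_top (m : ℕ) : pmap X (m+1) m = pfull X (m+1) := by
  unfold pmap pfull
  congr 1
  apply Finset.sum_congr
  · unfold Sk
    rw [Finset.filter_true_of_mem]
    intro t _ j hj
    exfalso
    have := j.isLt
    omega
  · intro _ _; rfl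

lemma aux_pmap_sub (m : ℕ) (hm : 0 < m) : pmap X m (m-1) = pfull X m := by
  unfold pmap pfull
  rw [show m - 1 + 1 = m by omega]
  congr 1
  apply Finset.sum_congr
  · unfold Sk
    rw [Finset.filter_true_of_mem]
    intro t _ j hj
    exfalso
    have := j.isLt
    omega
  · intro _ _; rfl

lemma aux_delLe_top (n : ℕ) : delLe X n n = del X n := by
  unfold delLe del
  apply Finset.sum_congr
  · rw [Finset.filter_true_of_mem]
    intro i _
    have := i.isLt
    omega
  · intro _ _; rfl

lemma aux_delGt_top (n : ℕ) : delGt X n n = 0 := by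
  unfold delGt
  rw [Finset.filter_false_of_mem, Finset.sum_empty]
  intro i _
  have := i.isLt
  omega

end MainAux

theorem stmt4 {R : Type} [Field R] [CharZero R] (X : FintypeCatᵒᵖ ⥤ ModuleCat R) :
    (∀ n k : ℕ, 0 < k → k ≤ n →
      (del X n) ∘ₗ (pmap X (n + 1) k) =
        (pmap X n (k - 1)) ∘ₗ (delLe X n k) + (pmap X n k) ∘ₗ (delGt X n k)) ∧
    (∀ n : ℕ, (del X n) ∘ₗ (pfull X (n + 1)) = (pfull X n) ∘ₗ (del X n)) := by
  constructor
  · exact fun n k hk hkn => aux_part1 X n k hk hkn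
  · intro n
    rcases Nat.eq_zero_or_pos n with rfl | hn
    · rw [aux_pfull_small X 1 le_rfl, aux_pfull_small X 0 (by omega)]
      rw [LinearMap.comp_id, LinearMap.id_comp]
    · have h := aux_part1 X n n hn le_rfl
      rw [aux_pmap_top, aux_pmap_sub X n hn, aux_delLe_top, aux_delGt_top,
        LinearMap.comp_zero, add_zero] at h
      exact h
end

section
/- Let R be a field of characteristic 0 and X a symmetric simplicial R-module. Then for every n: (i) ∂_n maps sDeg_nX into sDeg_{n−1}X, so sDeg_*X is a subcomplex of C_*X; (ii) p_n^(n) is idempotent, its kernel equals sDeg_nX, and its image equals P_nX := the R-span of { Σ_{t ∈ Perm(Fin (n+1))} sgn(t)·(t·x) : x ∈ X_n }; (iii) C_nX = sDeg_nX ⊕ P_nX, and both summands are invariant under the Perm(Fin (n+1))-action; in particular the short exact sequence of chain complexes 0 → sDeg_*X → C_*X → P_*X → 0 (with surjection p_X) splits via the inclusion P_*X ↪ C_*X. -/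
open CategoryTheory Opposite
noncomputable section
variable {R : Type} [Field R] [CharZero R]

variable (X : FintypeCatᵒᵖ ⥤ ModuleCat R)

/-- The symmetry submodule `sDeg`, spanned by all `x - sgn(t) • (t • x)`. -/
def sDeg (m : ℕ) : Submodule R (MM X m) :=
  Submodule.span R
    {y | ∃ (x : MM X m) (t : Equiv.Perm (Fin m)), y = x - sgnR R t • pact X m t x}

/-- The submodule `P`, spanned by all `∑_t sgn(t) • (t • x)`. -/
def Psub (m : ℕ) : Submodule R (MM X m) :=
  Submodule.span R
    {y | ∃ x : MM X m, y = ∑ t : Equiv.Perm (Fin m), sgnR R t • pact X m t x}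

set_option linter.unusedSectionVars false
set_option linter.unnecessarySeqFocus false

lemma act_comp {m k l : ℕ} (f : Fin m → Fin k) (g : Fin k → Fin l) :
    act X (g ∘ f) = (act X f) ∘ₗ (act X g) := by
  have : (Quiver.Hom.op (show fobj m ⟶ fobj l from FintypeCat.homMk (g ∘ f)))
      = (Quiver.Hom.op (show fobj k ⟶ fobj l from FintypeCat.homMk g)) ≫
        (Quiver.Hom.op (show fobj m ⟶ fobj k from FintypeCat.homMk f)) := rfl
  show (X.map _).hom = LinearMap.comp _ _
  rw [this, X.map_comp]
  rfl

lemma act_id (m : ℕ) : act X (id : Fin m → Fin m) = LinearMap.id := by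
  show (X.map _).hom = _
  have : (Quiver.Hom.op (show fobj m ⟶ fobj m from FintypeCat.homMk id)) = 𝟙 (op (fobj m)) := rfl
  rw [this, X.map_id]
  rfl

lemma pact_mul (m : ℕ) (t s : Equiv.Perm (Fin m)) :
    pact X m (t * s) = (pact X m s) ∘ₗ (pact X m t) := by
  have : ((t * s : Equiv.Perm (Fin m)) : Fin m → Fin m) = (t : Fin m → Fin m) ∘ s := rfl
  rw [pact, this, act_comp]; rfl

def Amap (m : ℕ) : MM X m →ₗ[R] MM X m :=
  ∑ t : Equiv.Perm (Fin m), sgnR R t • pact X m t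

lemma sgnR_mul {m : ℕ} (t s : Equiv.Perm (Fin m)) :
    sgnR R (t * s) = sgnR R t * sgnR R s := by
  simp [sgnR]

lemma sgnR_sq {m : ℕ} (t : Equiv.Perm (Fin m)) : sgnR R t * sgnR R t = 1 := by
  rw [← sgnR_mul]
  rcases Int.units_eq_one_or (Equiv.Perm.sign t) with h | h <;> simp [sgnR, h]

lemma sgnR_inv {m : ℕ} (t : Equiv.Perm (Fin m)) : sgnR R t⁻¹ = sgnR R t := by
  simp [sgnR]

lemma pact_mul_apply (m : ℕ) (t s : Equiv.Perm (Fin m)) (x : MM X m) :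
    pact X m (t * s) x = pact X m s (pact X m t x) := by
  rw [pact_mul]; rfl

lemma Amap_comp_pact (m : ℕ) (s : Equiv.Perm (Fin m)) :
    (Amap X m) ∘ₗ (pact X m s) = sgnR R s • Amap X m := by
  ext x
  simp only [LinearMap.comp_apply, LinearMap.smul_apply, Amap, LinearMap.sum_apply,
    Finset.smul_sum]
  refine Fintype.sum_equiv (Equiv.mulLeft s) _ _ fun t => ?_
  simp only [Equiv.coe_mulLeft]
  rw [← pact_mul_apply, sgnR_mul, smul_smul]
  congr 1
  rw [← mul_assoc, sgnR_sq, one_mul]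

lemma pact_comp_Amap (m : ℕ) (s : Equiv.Perm (Fin m)) :
    (pact X m s) ∘ₗ (Amap X m) = sgnR R s • Amap X m := by
  ext x
  simp only [LinearMap.comp_apply, LinearMap.smul_apply, Amap, LinearMap.sum_apply,
    Finset.smul_sum, map_sum, map_smul]
  refine Fintype.sum_equiv (Equiv.mulRight s) _ _ fun t => ?_
  simp only [Equiv.coe_mulRight]
  rw [← pact_mul_apply, sgnR_mul, smul_smul]
  congr 1
  rw [mul_comm (sgnR R t), ← mul_assoc, sgnR_sq, one_mul]

lemma pfull_eq (m : ℕ) : pfull X m = ((Nat.factorial m : R)⁻¹) • Amap X m := rfl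

lemma fact_ne (R : Type) [Field R] [CharZero R] (m : ℕ) : (Nat.factorial m : R) ≠ 0 :=
  Nat.cast_ne_zero.mpr (Nat.factorial_ne_zero m)

lemma pfull_pact (m : ℕ) (s : Equiv.Perm (Fin m)) (x : MM X m) :
    pfull X m (pact X m s x) = sgnR R s • pfull X m x := by
  have h2 : Amap X m (pact X m s x) = sgnR R s • Amap X m x :=
    congrArg (fun f => f x) (Amap_comp_pact X m s)
  simp only [pfull_eq, LinearMap.smul_apply, h2, smul_comm ((Nat.factorial m : R)⁻¹)]

lemma pact_pfull (m : ℕ) (s : Equiv.Perm (Fin m)) (x : MM X m) :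
    pact X m s (pfull X m x) = sgnR R s • pfull X m x := by
  have h2 : pact X m s (Amap X m x) = sgnR R s • Amap X m x :=
    congrArg (fun f => f x) (pact_comp_Amap X m s)
  simp only [pfull_eq, LinearMap.smul_apply, map_smul, h2, smul_comm ((Nat.factorial m : R)⁻¹)]

lemma Amap_Amap (m : ℕ) (x : MM X m) :
    Amap X m (Amap X m x) = (Nat.factorial m : R) • Amap X m x := by
  have h : Amap X m x = ∑ t : Equiv.Perm (Fin m), sgnR R t • pact X m t x := by
    simp [Amap, LinearMap.sum_apply]
  conv_lhs => rw [h]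
  rw [map_sum]
  have : ∀ t : Equiv.Perm (Fin m),
      Amap X m (sgnR R t • pact X m t x) = Amap X m x := by
    intro t
    rw [map_smul]
    have h2 : Amap X m (pact X m t x) = sgnR R t • Amap X m x :=
      congrArg (fun f => f x) (Amap_comp_pact X m t)
    rw [h2, smul_smul, sgnR_sq, one_smul]
  rw [Finset.sum_congr rfl (fun t _ => this t), Finset.sum_const, Finset.card_univ]
  rw [Fintype.card_perm, Fintype.card_fin, ← Nat.cast_smul_eq_nsmul R]

lemma pfull_Amap (m : ℕ) (x : MM X m) : pfull X m (Amap X m x) = Amap X m x := by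
  simp only [pfull_eq, LinearMap.smul_apply, Amap_Amap, smul_smul,
    inv_mul_cancel₀ (fact_ne R m), one_smul]

lemma pfull_idem (m : ℕ) (x : MM X m) : pfull X m (pfull X m x) = pfull X m x := by
  simp only [pfull_eq, LinearMap.smul_apply, map_smul, Amap_Amap, smul_smul]
  rw [inv_mul_cancel₀ (fact_ne R m), mul_one]

lemma sub_pfull_sum (m : ℕ) (x : MM X m) :
    x - pfull X m x = ((Nat.factorial m : R)⁻¹) •
      ∑ t : Equiv.Perm (Fin m), (x - sgnR R t • pact X m t x) := by
  rw [Finset.sum_sub_distrib, Finset.sum_const, Finset.card_univ, Fintype.card_perm,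
    Fintype.card_fin, smul_sub, pfull_eq]
  congr 1
  rw [← Nat.cast_smul_eq_nsmul R, smul_smul, inv_mul_cancel₀ (fact_ne R m), one_smul]
  simp [Amap, LinearMap.sum_apply]

lemma Amap_apply (m : ℕ) (x : MM X m) :
    Amap X m x = ∑ t : Equiv.Perm (Fin m), sgnR R t • pact X m t x := by
  simp [Amap, LinearMap.sum_apply]

lemma gen_mem_sDeg (m : ℕ) (x : MM X m) (t : Equiv.Perm (Fin m)) :
    x - sgnR R t • pact X m t x ∈ sDeg X m :=
  Submodule.subset_span ⟨x, t, rfl⟩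

lemma Amap_mem_Psub (m : ℕ) (x : MM X m) : Amap X m x ∈ Psub X m := by
  rw [Amap_apply]
  exact Submodule.subset_span ⟨x, rfl⟩

lemma sub_pfull_mem_sDeg (m : ℕ) (x : MM X m) : x - pfull X m x ∈ sDeg X m := by
  rw [sub_pfull_sum]
  exact Submodule.smul_mem _ _ (Submodule.sum_mem _ fun t _ => gen_mem_sDeg X m x t)

lemma ker_pfull (m : ℕ) : LinearMap.ker (pfull X m) = sDeg X m := by
  apply le_antisymm
  · intro x hx
    rw [LinearMap.mem_ker] at hx
    have := sub_pfull_mem_sDeg X m x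
    rwa [hx, sub_zero] at this
  · rw [sDeg, Submodule.span_le]
    rintro y ⟨x, t, rfl⟩
    simp only [SetLike.mem_coe, LinearMap.mem_ker, map_sub, map_smul, pfull_pact,
      smul_smul, sgnR_sq, one_smul, sub_self]

lemma range_pfull (m : ℕ) : LinearMap.range (pfull X m) = Psub X m := by
  apply le_antisymm
  · rintro _ ⟨x, rfl⟩
    rw [pfull_eq, LinearMap.smul_apply]
    exact Submodule.smul_mem _ _ (Amap_mem_Psub X m x)
  · rw [Psub, Submodule.span_le]
    rintro y ⟨x, rfl⟩
    rw [← Amap_apply]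
    exact ⟨Amap X m x, pfull_Amap X m x⟩

lemma pfull_fix (m : ℕ) (x : MM X m) (hx : x ∈ Psub X m) : pfull X m x = x := by
  refine Submodule.span_induction ?_ ?_ ?_ ?_ hx
  · rintro y ⟨x, rfl⟩
    rw [← Amap_apply]
    exact pfull_Amap X m x
  · exact map_zero _
  · intro a b _ _ ha hb
    rw [map_add, ha, hb]
  · intro r a _ ha
    rw [map_smul, ha]

lemma isCompl_sDeg_Psub (m : ℕ) : IsCompl (sDeg X m) (Psub X m) := by
  constructor
  · rw [disjoint_iff_inf_le]
    intro x ⟨h1, h2⟩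
    have hfix := pfull_fix X m x h2
    rw [← ker_pfull] at h1
    simp only [SetLike.mem_coe, LinearMap.mem_ker] at h1
    rw [h1] at hfix
    simp [← hfix]
  · rw [codisjoint_iff, eq_top_iff]
    intro x _
    have : x = (x - pfull X m x) + pfull X m x := by abel
    rw [this]
    exact Submodule.add_mem_sup (sub_pfull_mem_sDeg X m x)
      (by rw [← range_pfull]; exact ⟨x, rfl⟩)

lemma pact_sDeg (m : ℕ) (t : Equiv.Perm (Fin m)) (x : MM X m) (hx : x ∈ sDeg X m) :
    pact X m t x ∈ sDeg X m := by
  rw [← ker_pfull, LinearMap.mem_ker] at hx ⊢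
  rw [pfull_pact, hx, smul_zero]

lemma pact_Psub (m : ℕ) (t : Equiv.Perm (Fin m)) (x : MM X m) (hx : x ∈ Psub X m) :
    pact X m t x ∈ Psub X m := by
  have h := pfull_fix X m x hx
  rw [← h, pact_pfull, ← range_pfull]
  exact Submodule.smul_mem _ _ ⟨x, rfl⟩

lemma swapA (n : ℕ) (j : Fin n) :
    (⇑(Equiv.swap j.castSucc j.succ)) ∘ (Fin.succAbove j.castSucc) = Fin.succAbove j.succ := by
  funext k
  simp only [Function.comp_apply, Equiv.swap_apply_def, Fin.succAbove]
  split_ifs <;>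
    (apply Fin.ext <;>
     simp only [Fin.ext_iff, Fin.lt_def, Fin.coe_castSucc, Fin.val_succ] at * <;> omega)

lemma swapB (n : ℕ) (j : Fin n) :
    (⇑(Equiv.swap j.castSucc j.succ)) ∘ (Fin.succAbove j.succ) = Fin.succAbove j.castSucc := by
  funext k
  simp only [Function.comp_apply, Equiv.swap_apply_def, Fin.succAbove]
  split_ifs <;>
    (apply Fin.ext <;>
     simp only [Fin.ext_iff, Fin.lt_def, Fin.coe_castSucc, Fin.val_succ] at * <;> omega)

lemma swapC (n : ℕ) (j : Fin n) (i : Fin (n+1)) (h1 : i ≠ j.castSucc) (h2 : i ≠ j.succ) :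
    ∃ a b : Fin n, a ≠ b ∧
      (⇑(Equiv.swap j.castSucc j.succ)) ∘ (Fin.succAbove i)
        = (Fin.succAbove i) ∘ ⇑(Equiv.swap a b) := by
  have hv1 : (i : ℕ) ≠ (j : ℕ) := by
    intro h; exact h1 (Fin.ext (by simpa using h))
  have hv2 : (i : ℕ) ≠ (j : ℕ) + 1 := by
    intro h; exact h2 (Fin.ext (by simpa using h))
  rcases lt_or_gt_of_ne hv1 with hlt | hgt
  · have hj1 : 1 ≤ (j : ℕ) := by omega
    refine ⟨⟨(j : ℕ) - 1, by omega⟩, j, by simp [Fin.ext_iff]; omega, ?_⟩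
    funext k
    simp only [Function.comp_apply, Equiv.swap_apply_def, Fin.succAbove]
    split_ifs <;>
      (apply Fin.ext <;>
       simp only [Fin.ext_iff, Fin.lt_def, Fin.coe_castSucc, Fin.val_succ] at * <;> omega)
  · have hb : (j : ℕ) + 1 < n := by
      have := i.isLt; omega
    refine ⟨j, ⟨(j : ℕ) + 1, hb⟩, by simp [Fin.ext_iff], ?_⟩
    funext k
    simp only [Function.comp_apply, Equiv.swap_apply_def, Fin.succAbove]
    split_ifs <;>
      (apply Fin.ext <;>
       simp only [Fin.ext_iff, Fin.lt_def, Fin.coe_castSucc, Fin.val_succ] at * <;> omega)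

lemma sgnR_swap {m : ℕ} {a b : Fin m} (h : a ≠ b) :
    sgnR R (Equiv.swap a b) = -1 := by
  rw [sgnR, Equiv.Perm.sign_swap h]
  simp

lemma face_pact (n : ℕ) (i : Fin (n + 1)) (s : Equiv.Perm (Fin (n + 1))) (x : MM X (n + 1)) :
    face X n i (pact X (n + 1) s x) = act X ((s : Fin (n+1) → Fin (n+1)) ∘ Fin.succAbove i) x := by
  rw [act_comp]; rfl

lemma del_apply (n : ℕ) (x : MM X (n + 1)) :
    del X n x = ∑ i : Fin (n + 1), ((-1 : R) ^ (i : ℕ)) • face X n i x := by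
  simp [del, LinearMap.sum_apply]

lemma key_swap (n : ℕ) (j : Fin n) (x : MM X (n + 1)) :
    pfull X n (del X n (pact X (n + 1) (Equiv.swap j.castSucc j.succ) x))
      = - pfull X n (del X n x) := by
  set s := Equiv.swap j.castSucc j.succ with hs
  have hne : j.castSucc ≠ j.succ := (Fin.castSucc_lt_succ (i := j)).ne
  have hterm : ∀ i : Fin (n + 1),
      pfull X n (face X n i (pact X (n + 1) s x)) + pfull X n (face X n i x) =
        if i = j.castSucc then pfull X n (face X n j.succ x) + pfull X n (face X n j.castSucc x)
        else if i = j.succ then pfull X n (face X n j.castSucc x) + pfull X n (face X n j.succ x)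
        else 0 := by
    intro i
    by_cases h1 : i = j.castSucc
    · subst h1
      rw [if_pos rfl, face_pact, swapA]
      rfl
    rw [if_neg h1]
    by_cases h2 : i = j.succ
    · subst h2
      rw [if_pos rfl, face_pact, swapB]
      rfl
    rw [if_neg h2]
    obtain ⟨a, b, hab, hfun⟩ := swapC n j i h1 h2
    rw [face_pact, hfun]
    have : act X ((Fin.succAbove i) ∘ ⇑(Equiv.swap a b)) x
        = pact X n (Equiv.swap a b) (face X n i x) := by
      rw [act_comp]; rfl
    rw [this, pfull_pact, sgnR_swap (R := R) hab]
    simp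
  have hsum : ∑ i : Fin (n + 1), ((-1 : R) ^ (i : ℕ)) •
      (pfull X n (face X n i (pact X (n + 1) s x)) + pfull X n (face X n i x)) = 0 := by
    rw [Finset.sum_congr rfl (fun i _ => by rw [hterm i])]
    rw [← Finset.sum_subset (Finset.subset_univ {j.castSucc, j.succ})]
    · rw [Finset.sum_pair hne]
      rw [if_pos rfl, if_neg (Ne.symm hne), if_pos rfl]
      have h1 : ((j.castSucc : Fin (n+1)) : ℕ) = (j : ℕ) := rfl
      have h2 : ((j.succ : Fin (n+1)) : ℕ) = (j : ℕ) + 1 := rfl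
      rw [h1, h2, pow_succ, mul_neg_one, neg_smul,
        add_comm ((pfull X n) ((face X n j.succ) x)) ((pfull X n) ((face X n j.castSucc) x))]
      exact add_neg_cancel _
    · intro i _ hi
      simp only [Finset.mem_insert, Finset.mem_singleton, not_or] at hi
      rw [if_neg hi.1, if_neg hi.2, smul_zero]
  have hsum2 : (∑ i : Fin (n + 1), ((-1 : R) ^ (i : ℕ)) •
        pfull X n (face X n i (pact X (n+1) s x)))
      + ∑ i : Fin (n + 1), ((-1 : R) ^ (i : ℕ)) • pfull X n (face X n i x) = 0 := by
    rw [← Finset.sum_add_distrib, ← hsum]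
    exact Finset.sum_congr rfl fun i _ => (smul_add _ _ _).symm
  have e1 : pfull X n (del X n (pact X (n + 1) s x))
      = ∑ i : Fin (n + 1), ((-1 : R) ^ (i : ℕ)) • pfull X n (face X n i (pact X (n+1) s x)) := by
    rw [del_apply, map_sum]
    exact Finset.sum_congr rfl fun i _ => map_smul _ _ _
  have e2 : pfull X n (del X n x)
      = ∑ i : Fin (n + 1), ((-1 : R) ^ (i : ℕ)) • pfull X n (face X n i x) := by
    rw [del_apply, map_sum]
    exact Finset.sum_congr rfl fun i _ => map_smul _ _ _
  rw [e1, e2]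
  exact eq_neg_of_add_eq_zero_left hsum2

lemma pact_one (m : ℕ) (x : MM X m) : pact X m 1 x = x := by
  have : pact X m 1 = act X (id : Fin m → Fin m) := rfl
  rw [this, act_id]
  rfl

lemma sgnR_one (m : ℕ) : sgnR R (1 : Equiv.Perm (Fin m)) = 1 := by simp [sgnR]

lemma del_pact (n : ℕ) (t : Equiv.Perm (Fin (n + 1))) (x : MM X (n + 1)) :
    pfull X n (del X n (pact X (n + 1) t x)) = sgnR R t • pfull X n (del X n x) := by
  have ht : t ∈ Submonoid.closure (Set.range fun i : Fin n => Equiv.swap i.castSucc i.succ) := by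
    rw [Equiv.Perm.mclosure_swap_castSucc_succ]
    trivial
  revert x
  refine Submonoid.closure_induction
    (motive := fun t _ => ∀ x : MM X (n + 1),
      pfull X n (del X n (pact X (n + 1) t x)) = sgnR R t • pfull X n (del X n x))
    ?_ ?_ ?_ ht
  · rintro _ ⟨j, rfl⟩ x
    rw [key_swap, sgnR_swap (R := R) (Fin.castSucc_lt_succ (i := j)).ne, neg_smul, one_smul]
  · intro x
    rw [pact_one, sgnR_one, one_smul]
  · intro a b _ _ ha hb x
    rw [pact_mul_apply, hb, ha, smul_smul, sgnR_mul, mul_comm]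

lemma del_sDeg (n : ℕ) (x : MM X (n + 1)) (hx : x ∈ sDeg X (n + 1)) :
    del X n x ∈ sDeg X n := by
  refine Submodule.span_induction ?_ ?_ ?_ ?_ hx
  · rintro y ⟨x, t, rfl⟩
    rw [← ker_pfull, LinearMap.mem_ker, map_sub, map_smul, map_sub, map_smul,
      del_pact, smul_smul, sgnR_sq, one_smul, sub_self]
  · simp [← ker_pfull]
  · intro a b _ _ ha hb
    rw [map_add]
    exact Submodule.add_mem _ ha hb
  · intro r a _ ha
    rw [map_smul]
    exact Submodule.smul_mem _ _ ha


end

theorem stmt5 {R : Type} [Field R] [CharZero R] (X : FintypeCatᵒᵖ ⥤ ModuleCat R) :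
    -- (i) `sDeg` is a subcomplex of `C_*X`
    (∀ (n : ℕ), ∀ x ∈ sDeg X (n + 1), del X n x ∈ sDeg X n) ∧
    -- (ii) `p_n^(n)` is idempotent, with kernel `sDeg` and range `P`
    (∀ m : ℕ, (pfull X m) ∘ₗ (pfull X m) = pfull X m) ∧
    (∀ m : ℕ, LinearMap.ker (pfull X m) = sDeg X m) ∧
    (∀ m : ℕ, LinearMap.range (pfull X m) = Psub X m) ∧
    -- (iii) direct sum decomposition `C_nX = sDeg ⊕ P`, invariant under permutations
    (∀ m : ℕ, IsCompl (sDeg X m) (Psub X m)) ∧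
    (∀ (m : ℕ) (t : Equiv.Perm (Fin m)), ∀ x ∈ sDeg X m, pact X m t x ∈ sDeg X m) ∧
    (∀ (m : ℕ) (t : Equiv.Perm (Fin m)), ∀ x ∈ Psub X m, pact X m t x ∈ Psub X m) ∧
    -- the inclusion `P_*X ↪ C_*X` splits the short exact sequence
    -- `0 → sDeg_*X → C_*X → P_*X → 0` (whose surjection is `p_X`)
    (∀ m : ℕ, ∀ x ∈ Psub X m, pfull X m x = x) :=
  ⟨fun n x hx => del_sDeg X n x hx,
   fun m => LinearMap.ext fun x => pfull_idem X m x,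
   fun m => ker_pfull X m,
   fun m => range_pfull X m,
   fun m => isCompl_sDeg_Psub X m,
   fun m t x hx => pact_sDeg X m t x hx,
   fun m t x hx => pact_Psub X m t x hx,
   fun m x hx => pfull_fix X m x hx⟩
end

section
/- Let X be a cubical abelian group, i.e. a cubical ℤ-module with connections. Then the positive connection subcomplex posCon_*X of the cubical alternating face map complex C_*X is acyclic: all of its homology groups vanish. -/
/-- A cubical abelian group (cubical `ℤ`-module with connections): abelian groups `X n`
with faces `d n ε i : X (n+1) → X n` (meaningful for `1 ≤ i ≤ n+1`), degeneracies
`s n i : X n → X (n+1)` (for `1 ≤ i ≤ n+1`) and connections `γ n ε i : X n → X (n+1)`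
(for `1 ≤ i ≤ n`), subject to the cubical identities (C1)–(C6). -/
structure CubicalAb where
  X : ℕ → Type
  [acg : ∀ n, AddCommGroup (X n)]
  d : ∀ n : ℕ, Fin 2 → ℕ → (X (n + 1) →+ X n)
  s : ∀ n : ℕ, ℕ → (X n →+ X (n + 1))
  γ : ∀ n : ℕ, Fin 2 → ℕ → (X n →+ X (n + 1))
  C1 : ∀ (n : ℕ) (ε η : Fin 2) (i j : ℕ), 1 ≤ j → j ≤ i → i ≤ n + 1 →
    (d n ε i).comp (d (n + 1) η j) = (d n η j).comp (d (n + 1) ε (i + 1))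
  C2a : ∀ (n : ℕ) (ε : Fin 2) (i j : ℕ), 1 ≤ j → j < i → i ≤ n + 2 →
    (d (n + 1) ε i).comp (s (n + 1) j) = (s n j).comp (d n ε (i - 1))
  C2b : ∀ (n : ℕ) (ε : Fin 2) (i : ℕ), 1 ≤ i → i ≤ n + 2 →
    (d (n + 1) ε i).comp (s (n + 1) i) = AddMonoidHom.id _
  C2c : ∀ (n : ℕ) (ε : Fin 2) (i j : ℕ), 1 ≤ i → i < j → j ≤ n + 2 →
    (d (n + 1) ε i).comp (s (n + 1) j) = (s n (j - 1)).comp (d n ε i)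
  C3 : ∀ (n i j : ℕ), 1 ≤ j → j ≤ i → i ≤ n + 1 →
    (s (n + 1) j).comp (s n i) = (s (n + 1) (i + 1)).comp (s n j)
  C4a : ∀ (n : ℕ) (ε η : Fin 2) (i j : ℕ), 1 ≤ j → j < i → i ≤ n →
    (γ (n + 1) ε j).comp (γ n η i) = (γ (n + 1) η (i + 1)).comp (γ n ε j)
  C4b : ∀ (n : ℕ) (ε : Fin 2) (i : ℕ), 1 ≤ i → i ≤ n →
    (γ (n + 1) ε i).comp (γ n ε i) = (γ (n + 1) ε (i + 1)).comp (γ n ε i)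
  C5a : ∀ (n : ℕ) (ε η : Fin 2) (i j : ℕ), 1 ≤ j → j + 1 < i → i ≤ n + 2 →
    (d (n + 1) ε i).comp (γ (n + 1) η j) = (γ n η j).comp (d n ε (i - 1))
  C5b : ∀ (n : ℕ) (ε : Fin 2) (j : ℕ), 1 ≤ j → j ≤ n + 1 →
    (d (n + 1) ε j).comp (γ (n + 1) ε j) = AddMonoidHom.id _ ∧
      (d (n + 1) ε (j + 1)).comp (γ (n + 1) ε j) = AddMonoidHom.id _
  C5c : ∀ (n : ℕ) (ε : Fin 2) (j : ℕ), 1 ≤ j → j ≤ n + 1 →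
    (d (n + 1) ε j).comp (γ (n + 1) (1 - ε) j) = (s n j).comp (d n ε j) ∧
      (d (n + 1) ε (j + 1)).comp (γ (n + 1) (1 - ε) j) = (s n j).comp (d n ε j)
  C5d : ∀ (n : ℕ) (ε η : Fin 2) (i j : ℕ), 1 ≤ i → i < j → j ≤ n + 1 →
    (d (n + 1) ε i).comp (γ (n + 1) η j) = (γ n η (j - 1)).comp (d n ε i)
  C6a : ∀ (n : ℕ) (ε : Fin 2) (i j : ℕ), 1 ≤ j → j < i → i ≤ n + 1 →
    (γ (n + 1) ε i).comp (s n j) = (s (n + 1) j).comp (γ n ε (i - 1))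
  C6b : ∀ (n : ℕ) (ε : Fin 2) (i : ℕ), 1 ≤ i → i ≤ n + 1 →
    (γ (n + 1) ε i).comp (s n i) = (s (n + 1) i).comp (s n i)
  C6c : ∀ (n : ℕ) (ε : Fin 2) (i j : ℕ), 1 ≤ i → i < j → j ≤ n + 1 →
    (γ (n + 1) ε i).comp (s n j) = (s (n + 1) (j + 1)).comp (γ n ε i)

attribute [instance] CubicalAb.acg

/-- The subgroup of degenerate elements, generated by the images of the degeneracies. -/
def CubicalAb.cDeg (Y : CubicalAb) : ∀ n : ℕ, AddSubgroup (Y.X n)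
  | 0 => ⊥
  | (n + 1) => ⨆ i ∈ Finset.Icc 1 (n + 1), AddMonoidHom.range (Y.s n i)

/-- The chain group `C_nX = X_n / cDeg_n(X)`. -/
abbrev CubicalAb.CC (Y : CubicalAb) (n : ℕ) := Y.X n ⧸ Y.cDeg n

/-- The alternating face map `∂_{n+1} = ∑_{i=1}^{n+1} (-1)^{i-1} (d_i^0 - d_i^1)`. -/
def CubicalAb.δ (Y : CubicalAb) (n : ℕ) : Y.X (n + 1) →+ Y.X n :=
  ∑ i ∈ Finset.Icc 1 (n + 1), ((-1 : ℤ) ^ (i - 1)) • (Y.d n 0 i - Y.d n 1 i)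


namespace CubicalAb
variable (Y : CubicalAb)

/-- partial alternating face sum over `Ioc a b` -/
def PP (n a b : ℕ) : Y.X (n+1) →+ Y.X n :=
  ∑ i ∈ Finset.Ioc a b, ((-1 : ℤ) ^ (i - 1)) • (Y.d n 0 i - Y.d n 1 i)

lemma delta_eq_PP (n : ℕ) : Y.δ n = Y.PP n 0 (n+1) := by
  rw [δ, PP, ← Finset.Icc_add_one_left_eq_Ioc, zero_add]

lemma PP_split (n a b c : ℕ) (hab : a ≤ b) (hbc : b ≤ c) :
    Y.PP n a c = Y.PP n a b + Y.PP n b c :=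
  (Finset.sum_Ioc_consecutive _ hab hbc).symm

lemma PP_single (n a : ℕ) :
    Y.PP n a (a+1) = ((-1 : ℤ) ^ a) • (Y.d n 0 (a+1) - Y.d n 1 (a+1)) := by
  rw [PP]
  rw [show Finset.Ioc a (a+1) = {a+1} by
    ext x; simp only [Finset.mem_Ioc, Finset.mem_singleton]; omega]
  rw [Finset.sum_singleton, Nat.add_sub_cancel]

lemma PP_bot (n a : ℕ) : Y.PP n a a = 0 := by
  rw [PP, Finset.Ioc_self, Finset.sum_empty]

lemma S1 (m a b q : ℕ) (hbq : b ≤ q) (hq : q + 1 ≤ m + 1) :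
    (Y.PP (m+1) a b).comp (Y.γ (m+1) 0 (q+1)) = (Y.γ m 0 q).comp (Y.PP m a b) := by
  ext x
  simp only [AddMonoidHom.comp_apply, PP, AddMonoidHom.finset_sum_apply, map_sum]
  refine Finset.sum_congr rfl fun i hi => ?_
  obtain ⟨hi1, hi2⟩ := Finset.mem_Ioc.mp hi
  have h0 := Y.C5d m 0 0 i (q+1) (by omega) (by omega) (by omega)
  have h1 := Y.C5d m 1 0 i (q+1) (by omega) (by omega) (by omega)
  simp only [Nat.add_sub_cancel] at h0 h1
  have e0 := DFunLike.congr_fun h0 x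
  have e1 := DFunLike.congr_fun h1 x
  simp only [AddMonoidHom.comp_apply] at e0 e1
  simp only [AddMonoidHom.smul_apply, AddMonoidHom.sub_apply, e0, e1, map_zsmul, map_sub]

lemma S2 (m a b j : ℕ) (hj : 1 ≤ j) (hja : j ≤ a) (hb : b + 1 ≤ m + 2) :
    (Y.PP (m+1) (a+1) (b+1)).comp (Y.γ (m+1) 0 j) = -((Y.γ m 0 j).comp (Y.PP m a b)) := by
  ext x
  simp only [AddMonoidHom.comp_apply, AddMonoidHom.neg_apply, PP,
    AddMonoidHom.finset_sum_apply, map_sum]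
  have hmap : ∀ f : ℕ → Y.X (m+1),
      ∑ i ∈ Finset.Ioc (a+1) (b+1), f i = ∑ i ∈ Finset.Ioc a b, f (i+1) := by
    intro f
    rw [← Finset.map_add_right_Ioc a b 1, Finset.sum_map]
    rfl
  rw [hmap, ← Finset.sum_neg_distrib]
  refine Finset.sum_congr rfl fun i hi => ?_
  obtain ⟨hi1, hi2⟩ := Finset.mem_Ioc.mp hi
  have h0 := Y.C5a m 0 0 (i+1) j hj (by omega) (by omega)
  have h1 := Y.C5a m 1 0 (i+1) j hj (by omega) (by omega)
  simp only [Nat.add_sub_cancel] at h0 h1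
  have e0 := DFunLike.congr_fun h0 x
  have e1 := DFunLike.congr_fun h1 x
  simp only [AddMonoidHom.comp_apply] at e0 e1
  simp only [addRightEmbedding_apply, AddMonoidHom.smul_apply, AddMonoidHom.sub_apply,
    e0, e1, map_zsmul, map_sub, Nat.add_sub_cancel]
  obtain ⟨k, rfl⟩ : ∃ k, i = k + 1 := ⟨i - 1, by omega⟩
  rw [Nat.add_sub_cancel, pow_succ, mul_neg_one, neg_smul]

lemma S3 (m q : ℕ) (hq : q + 1 ≤ m + 1) :
    (Y.PP (m+1) q (q+2)).comp (Y.γ (m+1) 0 (q+1)) = 0 := by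
  rw [Y.PP_split (m+1) q (q+1) (q+2) (by omega) (by omega), PP_single,
    show q + 2 = (q+1) + 1 from rfl, PP_single]
  have hb := Y.C5b m 0 (q+1) (by omega) hq
  have hc := Y.C5c m 1 (q+1) (by omega) hq
  rw [show (1 - 1 : Fin 2) = 0 by decide] at hc
  ext x
  have e1 := DFunLike.congr_fun hb.1 x
  have e2 := DFunLike.congr_fun hb.2 x
  have e3 := DFunLike.congr_fun hc.1 x
  have e4 := DFunLike.congr_fun hc.2 x
  simp only [AddMonoidHom.comp_apply, AddMonoidHom.id_apply] at e1 e2 e3 e4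
  simp only [AddMonoidHom.add_apply, AddMonoidHom.comp_apply, AddMonoidHom.smul_apply,
    AddMonoidHom.sub_apply, AddMonoidHom.zero_apply, e1, e2, e3, e4]
  rw [pow_succ, mul_neg_one, neg_smul]
  abel

lemma LemQ (m r : ℕ) (hr : r + 1 ≤ m + 2) :
    (Y.δ (m+2)).comp (Y.γ (m+2) 0 (r+1)) + (Y.γ (m+1) 0 (r+1)).comp (Y.δ (m+1)) =
      (Y.γ (m+1) 0 r).comp (Y.PP (m+1) 0 r) + (Y.γ (m+1) 0 (r+1)).comp (Y.PP (m+1) 0 r)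
        + (Y.γ (m+1) 0 (r+1)).comp (Y.PP (m+1) r (r+1)) := by
  have h1 : (Y.PP (m+2) 0 r).comp (Y.γ (m+2) 0 (r+1)) =
      (Y.γ (m+1) 0 r).comp (Y.PP (m+1) 0 r) :=
    Y.S1 (m+1) 0 r r le_rfl (by omega)
  have h2 : (Y.PP (m+2) r (r+1+1)).comp (Y.γ (m+2) 0 (r+1)) = 0 :=
    Y.S3 (m+1) r (by omega)
  have h3 : (Y.PP (m+2) (r+1+1) (m+2+1)).comp (Y.γ (m+2) 0 (r+1))
      = -((Y.γ (m+1) 0 (r+1)).comp (Y.PP (m+1) (r+1) (m+2))) :=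
    Y.S2 (m+1) (r+1) (m+2) (r+1) (by omega) le_rfl (by omega)
  rw [Y.delta_eq_PP (m+2), Y.delta_eq_PP (m+1),
    Y.PP_split (m+2) 0 r (m+2+1) (by omega) (by omega),
    Y.PP_split (m+2) r (r+1+1) (m+2+1) (by omega) (by omega),
    Y.PP_split (m+1) 0 r (m+1+1) (by omega) (by omega),
    Y.PP_split (m+1) r (r+1) (m+1+1) (by omega) (by omega),
    AddMonoidHom.add_comp, AddMonoidHom.add_comp, h1, h2, h3,
    AddMonoidHom.comp_add, AddMonoidHom.comp_add]
  abel


/-- pointwise form of a composition identity -/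
lemma cpt {A B C : Type} [AddCommGroup A] [AddCommGroup B] [AddCommGroup C]
    {f : B →+ C} {g : A →+ B} {h : A →+ C} (H : f.comp g = h) (x : A) :
    f (g x) = h x := by
  rw [← AddMonoidHom.comp_apply, H]

/-- pointwise form of a composition identity, both sides compositions -/
lemma cpt2 {A B C D : Type} [AddCommGroup A] [AddCommGroup B] [AddCommGroup C] [AddCommGroup D]
    {f : B →+ C} {g : A →+ B} {h : D →+ C} {k : A →+ D} (H : f.comp g = h.comp k) (x : A) :
    f (g x) = h (k x) := by
  have := DFunLike.congr_fun H x
  simpa using this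

def EE (m r : ℕ) : AddSubgroup (Y.X (m+2)) :=
  (⨆ i ∈ Finset.Icc 1 r, (Y.γ (m+1) 0 i).range) ⊔ Y.cDeg (m+2)

lemma gamma_mem_EE (m r i : ℕ) (h1 : 1 ≤ i) (h2 : i ≤ r) (v : Y.X (m+1)) :
    Y.γ (m+1) 0 i v ∈ Y.EE m r := by
  apply AddSubgroup.mem_sup_left
  have hle : (Y.γ (m+1) 0 i).range ≤ ⨆ j ∈ Finset.Icc 1 r, (Y.γ (m+1) 0 j).range :=
    le_iSup₂ (f := fun j (_ : j ∈ Finset.Icc 1 r) => (Y.γ (m+1) 0 j).range) i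
      (Finset.mem_Icc.mpr ⟨h1, h2⟩)
  exact hle ⟨v, rfl⟩

lemma cDeg_succ (n : ℕ) :
    Y.cDeg (n+1) = ⨆ i ∈ Finset.Icc 1 (n+1), (Y.s n i).range := rfl

lemma s_mem_cDeg (n i : ℕ) (h1 : 1 ≤ i) (h2 : i ≤ n+1) (v : Y.X n) :
    Y.s n i v ∈ Y.cDeg (n+1) := by
  rw [cDeg_succ]
  have hle : (Y.s n i).range ≤ ⨆ j ∈ Finset.Icc 1 (n+1), (Y.s n j).range :=
    le_iSup₂ (f := fun j (_ : j ∈ Finset.Icc 1 (n+1)) => (Y.s n j).range) i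
      (Finset.mem_Icc.mpr ⟨h1, h2⟩)
  exact hle ⟨v, rfl⟩

lemma s_mem_EE (m r i : ℕ) (h1 : 1 ≤ i) (h2 : i ≤ m+2) (v : Y.X (m+1)) :
    Y.s (m+1) i v ∈ Y.EE m r :=
  AddSubgroup.mem_sup_right (Y.s_mem_cDeg (m+1) i h1 h2 v)

lemma mainX (m r j : ℕ) (z : Y.X (m+1)) (hj : 1 ≤ j) (hjr : j ≤ r + 1) (hrm : r + 1 ≤ m + 1) :
    Y.δ (m+2) (Y.γ (m+2) 0 (r+1) (Y.γ (m+1) 0 j z))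
      + Y.γ (m+1) 0 (r+1) (Y.δ (m+1) (Y.γ (m+1) 0 j z))
      - ((-1 : ℤ)^r) • Y.γ (m+1) 0 j z ∈ Y.EE m r := by
  have hT := DFunLike.congr_fun (Y.LemQ m r (by omega)) (Y.γ (m+1) 0 j z)
  simp only [AddMonoidHom.comp_apply, AddMonoidHom.add_apply] at hT
  rw [sub_eq_add_neg, hT]
  rcases r with _ | t
  · -- r = 0, forced j = 1
    obtain rfl : j = 1 := by omega
    have hb := Y.C5b m 0 1 le_rfl (by omega)
    have hc := Y.C5c m 1 1 le_rfl (by omega)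
    rw [show (1 - 1 : Fin 2) = 0 by decide] at hc
    have e1 : Y.d (m+1) 0 (0+1) (Y.γ (m+1) 0 1 z) = z := by
      have := cpt hb.1 z; simpa using this
    have e2 : Y.d (m+1) 1 (0+1) (Y.γ (m+1) 0 1 z) = Y.s m 1 (Y.d m 1 1 z) := cpt hc.1 z
    have e3 : Y.γ (m+1) 0 1 (Y.s m 1 (Y.d m 1 1 z)) =
        Y.s (m+1) 1 (Y.s m 1 (Y.d m 1 1 z)) := cpt (Y.C6b m 0 1 le_rfl (by omega)) _
    rw [Y.PP_bot, Y.PP_single]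
    simp only [AddMonoidHom.zero_apply, map_zero, zero_add, AddMonoidHom.smul_apply,
      AddMonoidHom.sub_apply, pow_zero, one_smul, e1, e2, map_sub, e3]
    have : Y.γ (m+1) 0 1 z - Y.s (m+1) 1 (Y.s m 1 (Y.d m 1 1 z)) + -(Y.γ (m+1) 0 1 z)
        = -(Y.s (m+1) 1 (Y.s m 1 (Y.d m 1 1 z))) := by abel
    rw [this]
    exact neg_mem (Y.s_mem_EE m 0 1 le_rfl (by omega) _)
  · -- r = t + 1
    have htm : t + 1 + 1 ≤ m + 1 := hrm
    by_cases hc1 : j = t + 1 + 1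
    · -- j = r + 1
      subst hc1
      -- A = PP (m+1) 0 (t+1) w  =  γ_(t+1) (PP m 0 (t+1) z)
      have hA : Y.PP (m+1) 0 (t+1) (Y.γ (m+1) 0 (t+1+1) z)
          = Y.γ m 0 (t+1) (Y.PP m 0 (t+1) z) :=
        cpt (Y.S1 m 0 (t+1) (t+1) le_rfl (by omega)) z
      have hb := Y.C5b m 0 (t+1+1) (by omega) (by omega)
      have hcc := Y.C5c m 1 (t+1+1) (by omega) (by omega)
      rw [show (1 - 1 : Fin 2) = 0 by decide] at hcc
      have e1 : Y.d (m+1) 0 (t+1+1) (Y.γ (m+1) 0 (t+1+1) z) = z := by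
        have := cpt hb.1 z; simpa using this
      have e2 : Y.d (m+1) 1 (t+1+1) (Y.γ (m+1) 0 (t+1+1) z)
          = Y.s m (t+1+1) (Y.d m 1 (t+1+1) z) := cpt hcc.1 z
      have e4 : Y.γ (m+1) 0 (t+1+1) (Y.γ m 0 (t+1) (Y.PP m 0 (t+1) z))
          = Y.γ (m+1) 0 (t+1) (Y.γ m 0 (t+1) (Y.PP m 0 (t+1) z)) :=
        (cpt (Y.C4b m 0 (t+1) (by omega) (by omega)) _).symm
      have e5 : Y.γ (m+1) 0 (t+1+1) (Y.s m (t+1+1) (Y.d m 1 (t+1+1) z))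
          = Y.s (m+1) (t+1+1) (Y.s m (t+1+1) (Y.d m 1 (t+1+1) z)) :=
        cpt (Y.C6b m 0 (t+1+1) (by omega) (by omega)) _
      rw [hA, Y.PP_single]
      simp only [AddMonoidHom.smul_apply, AddMonoidHom.sub_apply, e1, e2, e4,
        map_zsmul, map_sub, e5, smul_sub]
      have hre : ∀ X S G1 : Y.X (m+2),
          G1 + G1 + (((-1:ℤ)^(t+1)) • X - ((-1:ℤ)^(t+1)) • S) + -(((-1:ℤ)^(t+1)) • X)
          = G1 + G1 - ((-1:ℤ)^(t+1)) • S := fun X S G1 => by abel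
      rw [hre]
      refine sub_mem (add_mem ?_ ?_) (zsmul_mem (Y.s_mem_EE m (t+1) (t+1+1) (by omega) (by omega) _) _) <;>
        exact Y.gamma_mem_EE m (t+1) (t+1) (by omega) le_rfl _
    · by_cases hc2 : j = t + 1
      · -- j = r
        subst hc2
        have hsplitA : Y.PP (m+1) 0 (t+1) = Y.PP (m+1) 0 t + Y.PP (m+1) t (t+1) :=
          Y.PP_split (m+1) 0 t (t+1) (by omega) (by omega)
        have hA1 : Y.PP (m+1) 0 t (Y.γ (m+1) 0 (t+1) z)
            = Y.γ m 0 t (Y.PP m 0 t z) := cpt (Y.S1 m 0 t t le_rfl (by omega)) z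
        have hb := Y.C5b m 0 (t+1) (by omega) (by omega)
        have hcc := Y.C5c m 1 (t+1) (by omega) (by omega)
        rw [show (1 - 1 : Fin 2) = 0 by decide] at hcc
        have e1 : Y.d (m+1) 0 (t+1) (Y.γ (m+1) 0 (t+1) z) = z := by
          have := cpt hb.1 z; simpa using this
        have e2 : Y.d (m+1) 1 (t+1) (Y.γ (m+1) 0 (t+1) z)
            = Y.s m (t+1) (Y.d m 1 (t+1) z) := cpt hcc.1 z
        have e1' : Y.d (m+1) 0 (t+1+1) (Y.γ (m+1) 0 (t+1) z) = z := by
          have := cpt hb.2 z; simpa using this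
        have e2' : Y.d (m+1) 1 (t+1+1) (Y.γ (m+1) 0 (t+1) z)
            = Y.s m (t+1) (Y.d m 1 (t+1) z) := cpt hcc.2 z
        have e6 : Y.γ (m+1) 0 (t+1+1) (Y.s m (t+1) (Y.d m 1 (t+1) z))
            = Y.s (m+1) (t+1) (Y.γ m 0 (t+1) (Y.d m 1 (t+1) z)) := by
          have h := Y.C6a m 0 (t+1+1) (t+1) (by omega) (by omega) (by omega)
          simp only [Nat.add_sub_cancel] at h
          exact cpt h _
        -- the γ_{t+2}∘γ_t term
        have e7 : Y.γ (m+1) 0 (t+1+1) (Y.γ m 0 t (Y.PP m 0 t z)) ∈ Y.EE m (t+1) := by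
          rcases Nat.eq_zero_or_pos t with ht | ht
          · subst ht
            rw [Y.PP_bot]
            simp only [AddMonoidHom.zero_apply, map_zero]
            exact zero_mem _
          · obtain ⟨t', rfl⟩ : ∃ t', t = t' + 1 := ⟨t - 1, by omega⟩
            have h := Y.C4a m 0 0 (t'+1+1) (t'+1) (by omega) (by omega) (by omega)
            have he : Y.γ (m+1) 0 (t'+1+1+1) (Y.γ m 0 (t'+1) (Y.PP m 0 (t'+1) z))
                = Y.γ (m+1) 0 (t'+1) (Y.γ m 0 (t'+1+1) (Y.PP m 0 (t'+1) z)) :=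
              (cpt2 h (Y.PP m 0 (t'+1) z)).symm
            rw [he]
            exact Y.gamma_mem_EE m (t'+1+1) (t'+1) (by omega) (by omega) _
        have hsplit_pt : Y.PP (m+1) 0 (t+1) (Y.γ (m+1) 0 (t+1) z)
            = Y.γ m 0 t (Y.PP m 0 t z)
              + ((-1:ℤ)^t) • (z - Y.s m (t+1) (Y.d m 1 (t+1) z)) := by
          rw [hsplitA]
          simp only [AddMonoidHom.add_apply]
          rw [hA1]
          have hs := DFunLike.congr_fun (Y.PP_single (m+1) t) (Y.γ (m+1) 0 (t+1) z)
          simp only [AddMonoidHom.smul_apply, AddMonoidHom.sub_apply] at hs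
          rw [hs, e1, e2]
        have hB_pt : Y.PP (m+1) (t+1) (t+1+1) (Y.γ (m+1) 0 (t+1) z)
            = ((-1:ℤ)^(t+1)) • (z - Y.s m (t+1) (Y.d m 1 (t+1) z)) := by
          have hs := DFunLike.congr_fun (Y.PP_single (m+1) (t+1)) (Y.γ (m+1) 0 (t+1) z)
          simp only [AddMonoidHom.smul_apply, AddMonoidHom.sub_apply] at hs
          rw [hs, e1', e2']
        have key : Y.γ (m+1) 0 (t+1) (Y.PP (m+1) 0 (t+1) (Y.γ (m+1) 0 (t+1) z))
            + Y.γ (m+1) 0 (t+1+1) (Y.PP (m+1) 0 (t+1) (Y.γ (m+1) 0 (t+1) z))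
            + Y.γ (m+1) 0 (t+1+1) (Y.PP (m+1) (t+1) (t+1+1) (Y.γ (m+1) 0 (t+1) z))
            + -(((-1:ℤ)^(t+1)) • Y.γ (m+1) 0 (t+1) z)
            = Y.γ (m+1) 0 (t+1) (Y.γ m 0 t (Y.PP m 0 t z)
                  + ((-1:ℤ)^t) • (z - Y.s m (t+1) (Y.d m 1 (t+1) z)))
              + Y.γ (m+1) 0 (t+1+1) (Y.γ m 0 t (Y.PP m 0 t z))
              - ((-1:ℤ)^(t+1)) • Y.γ (m+1) 0 (t+1) z := by
          rw [hsplit_pt, hB_pt]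
          simp only [map_add, map_zsmul, map_sub, e6]
          module
        rw [key]
        refine sub_mem (add_mem ?_ e7) (zsmul_mem ?_ _)
        · exact Y.gamma_mem_EE m (t+1) (t+1) (by omega) (by omega) _
        · exact Y.gamma_mem_EE m (t+1) (t+1) (by omega) (by omega) _
      · -- j ≤ t
        have hst : j ≤ t := by omega
        obtain ⟨s, rfl⟩ : ∃ s, j = s + 1 := ⟨j - 1, by omega⟩
        have hsplitA : Y.PP (m+1) 0 (t+1)
            = Y.PP (m+1) 0 s + (Y.PP (m+1) s (s+1+1) + Y.PP (m+1) (s+1+1) (t+1)) := by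
          rw [Y.PP_split (m+1) 0 s (t+1) (by omega) (by omega),
            Y.PP_split (m+1) s (s+1+1) (t+1) (by omega) (by omega)]
        have hA1 : Y.PP (m+1) 0 s (Y.γ (m+1) 0 (s+1) z)
            = Y.γ m 0 s (Y.PP m 0 s z) := cpt2 (Y.S1 m 0 s s le_rfl (by omega)) z
        have hA2 : Y.PP (m+1) s (s+1+1) (Y.γ (m+1) 0 (s+1) z) = 0 := by
          have := cpt (Y.S3 m s (by omega)) z
          simpa using this
        have hA3 : Y.PP (m+1) (s+1+1) (t+1) (Y.γ (m+1) 0 (s+1) z)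
            = -(Y.γ m 0 (s+1) (Y.PP m (s+1) t z)) := by
          have h := Y.S2 m (s+1) t (s+1) (by omega) le_rfl (by omega)
          have := cpt h z
          simpa using this
        have hbig : Y.PP (m+1) 0 (t+1) (Y.γ (m+1) 0 (s+1) z)
            = Y.γ m 0 s (Y.PP m 0 s z) - Y.γ m 0 (s+1) (Y.PP m (s+1) t z) := by
          rw [hsplitA]
          simp only [AddMonoidHom.add_apply]
          rw [hA1, hA2, hA3]
          abel
        have hC5a := Y.C5a m 0 0 (t+1+1) (s+1) (by omega) (by omega) (by omega)
        have hC5a' := Y.C5a m 1 0 (t+1+1) (s+1) (by omega) (by omega) (by omega)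
        simp only [Nat.add_sub_cancel] at hC5a hC5a'
        have hd0 : Y.d (m+1) 0 (t+1+1) (Y.γ (m+1) 0 (s+1) z)
            = Y.γ m 0 (s+1) (Y.d m 0 (t+1) z) := cpt2 hC5a z
        have hd1 : Y.d (m+1) 1 (t+1+1) (Y.γ (m+1) 0 (s+1) z)
            = Y.γ m 0 (s+1) (Y.d m 1 (t+1) z) := cpt2 hC5a' z
        have hsing : Y.PP (m+1) (t+1) (t+1+1) (Y.γ (m+1) 0 (s+1) z)
            = ((-1:ℤ)^(t+1)) • (Y.γ m 0 (s+1) (Y.d m 0 (t+1) z)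
                - Y.γ m 0 (s+1) (Y.d m 1 (t+1) z)) := by
          have hs := DFunLike.congr_fun (Y.PP_single (m+1) (t+1)) (Y.γ (m+1) 0 (s+1) z)
          simp only [AddMonoidHom.smul_apply, AddMonoidHom.sub_apply] at hs
          rw [hs, hd0, hd1]
        have hγγ : ∀ x : Y.X m, Y.γ (m+1) 0 (t+1+1) (Y.γ m 0 (s+1) x)
            = Y.γ (m+1) 0 (s+1) (Y.γ m 0 (t+1) x) := fun x =>
          (cpt2 (Y.C4a m 0 0 (t+1) (s+1) (by omega) (by omega) (by omega)) x).symm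
        have e7' : Y.γ (m+1) 0 (t+1+1) (Y.γ m 0 s (Y.PP m 0 s z)) ∈ Y.EE m (t+1) := by
          rcases Nat.eq_zero_or_pos s with hs0 | hs0
          · subst hs0
            rw [Y.PP_bot]
            simp only [AddMonoidHom.zero_apply, map_zero]
            exact zero_mem _
          · obtain ⟨s', rfl⟩ : ∃ s', s = s' + 1 := ⟨s - 1, by omega⟩
            have h := Y.C4a m 0 0 (t+1) (s'+1) (by omega) (by omega) (by omega)
            have he : Y.γ (m+1) 0 (t+1+1) (Y.γ m 0 (s'+1) (Y.PP m 0 (s'+1) z))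
                = Y.γ (m+1) 0 (s'+1) (Y.γ m 0 (t+1) (Y.PP m 0 (s'+1) z)) :=
              (cpt2 h (Y.PP m 0 (s'+1) z)).symm
            rw [he]
            exact Y.gamma_mem_EE m (t+1) (s'+1) (by omega) (by omega) _
        rw [hbig, hsing]
        simp only [map_sub, map_add, map_zsmul, hγγ]
        repeat
          first
          | exact e7'
          | exact Y.gamma_mem_EE m (t+1) (t+1) (by omega) (by omega) _
          | exact Y.gamma_mem_EE m (t+1) (s+1) (by omega) (by omega) _
          | apply add_mem
          | apply sub_mem
          | apply neg_mem
          | apply zsmul_mem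

lemma delta_flat (n : ℕ) (x : Y.X (n+1)) :
    Y.δ n x = ∑ p ∈ (Finset.Icc 1 (n+1)) ×ˢ (Finset.univ : Finset (Fin 2)),
      ((-1:ℤ)^(p.1-1) * (-1:ℤ)^(p.2 : ℕ)) • Y.d n p.2 p.1 x := by
  rw [δ, AddMonoidHom.finset_sum_apply, Finset.sum_product]
  refine Finset.sum_congr rfl fun i _ => ?_
  rw [Fin.sum_univ_two]
  simp only [AddMonoidHom.smul_apply, AddMonoidHom.sub_apply, Fin.val_zero, Fin.val_one,
    pow_zero, pow_one, mul_one, mul_neg_one, neg_smul, smul_sub]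
  rw [sub_eq_add_neg]

lemma deldel (n : ℕ) (x : Y.X (n+2)) : Y.δ n (Y.δ (n+1) x) = 0 := by
  have expand : Y.δ n (Y.δ (n+1) x)
      = ∑ a ∈ ((Finset.Icc 1 (n+2)) ×ˢ (Finset.univ : Finset (Fin 2))) ×ˢ
          ((Finset.Icc 1 (n+1)) ×ˢ (Finset.univ : Finset (Fin 2))),
        (((-1:ℤ)^(a.1.1-1) * (-1:ℤ)^(a.1.2 : ℕ)) * ((-1:ℤ)^(a.2.1-1) * (-1:ℤ)^(a.2.2 : ℕ)))
          • Y.d n a.2.2 a.2.1 (Y.d (n+1) a.1.2 a.1.1 x) := by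
    rw [Finset.sum_product, Y.delta_flat (n+1) x, map_sum]
    refine Finset.sum_congr rfl fun q _ => ?_
    rw [map_zsmul, Y.delta_flat n, Finset.smul_sum]
    refine Finset.sum_congr rfl fun p _ => ?_
    rw [smul_smul]
  rw [expand]
  refine Finset.sum_involution
    (fun a _ => if a.1.1 ≤ a.2.1 then ((a.2.1 + 1, a.2.2), (a.1.1, a.1.2))
      else ((a.2.1, a.2.2), (a.1.1 - 1, a.1.2))) ?_ ?_ ?_ ?_
  · rintro ⟨⟨j, η⟩, ⟨i, ε⟩⟩ ha
    simp only [Finset.mem_product, Finset.mem_Icc, Finset.mem_univ, and_true] at ha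
    obtain ⟨⟨hj1, hj2⟩, hi1, hi2⟩ := ha
    dsimp only
    by_cases hij : j ≤ i
    · rw [if_pos hij]
      obtain ⟨k, rfl⟩ : ∃ k, i = k + 1 := ⟨i - 1, by omega⟩
      have e : Y.d n ε (k+1) (Y.d (n+1) η j x) = Y.d n η j (Y.d (n+1) ε (k+1+1) x) :=
        cpt2 (Y.C1 n ε η (k+1) j hj1 hij (by omega)) x
      rw [e, ← add_smul]
      have hco : ((-1:ℤ)^(j-1) * (-1:ℤ)^(η:ℕ)) * ((-1:ℤ)^(k+1-1) * (-1:ℤ)^(ε:ℕ))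
          + ((-1:ℤ)^(k+1+1-1) * (-1:ℤ)^(ε:ℕ)) * ((-1:ℤ)^(j-1) * (-1:ℤ)^(η:ℕ)) = 0 := by
        simp only [Nat.add_sub_cancel]
        ring
      rw [hco, zero_smul]
    · rw [if_neg hij]
      obtain ⟨u, rfl⟩ : ∃ u, j = u + 2 := ⟨j - 2, by omega⟩
      have e : Y.d n η (u+2-1) (Y.d (n+1) ε i x) = Y.d n ε i (Y.d (n+1) η (u+2) x) :=
        cpt2 (Y.C1 n η ε (u+1) i hi1 (by omega) (by omega)) x
      rw [e, ← add_smul]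
      have hco : ((-1:ℤ)^(u+2-1) * (-1:ℤ)^(η:ℕ)) * ((-1:ℤ)^(i-1) * (-1:ℤ)^(ε:ℕ))
          + ((-1:ℤ)^(i-1) * (-1:ℤ)^(ε:ℕ)) * ((-1:ℤ)^(u+2-1-1) * (-1:ℤ)^(η:ℕ)) = 0 := by
        simp only [show u+2-1 = u+1 from rfl, show u+1-1 = u from rfl]
        ring
      rw [hco, zero_smul]
  · rintro ⟨⟨j, η⟩, ⟨i, ε⟩⟩ ha _
    dsimp only
    by_cases hij : j ≤ i
    · rw [if_pos hij]
      intro hEq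
      have h1 := congrArg (fun y => y.1.1) hEq
      have h2 := congrArg (fun y => y.2.1) hEq
      dsimp at h1 h2
      omega
    · rw [if_neg hij]
      intro hEq
      have h1 := congrArg (fun y => y.1.1) hEq
      dsimp at h1
      omega
  · rintro ⟨⟨j, η⟩, ⟨i, ε⟩⟩ ha
    simp only [Finset.mem_product, Finset.mem_Icc, Finset.mem_univ, and_true] at ha
    obtain ⟨⟨hj1, hj2⟩, hi1, hi2⟩ := ha
    dsimp only
    by_cases hij : j ≤ i
    · rw [if_pos hij]
      simp only [Finset.mem_product, Finset.mem_Icc, Finset.mem_univ, and_true]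
      omega
    · rw [if_neg hij]
      simp only [Finset.mem_product, Finset.mem_Icc, Finset.mem_univ, and_true]
      omega
  · rintro ⟨⟨j, η⟩, ⟨i, ε⟩⟩ ha
    simp only [Finset.mem_product, Finset.mem_Icc, Finset.mem_univ, and_true] at ha
    obtain ⟨⟨hj1, hj2⟩, hi1, hi2⟩ := ha
    dsimp only
    by_cases hij : j ≤ i
    · rw [if_pos hij]
      dsimp only
      rw [if_neg (by omega : ¬ i + 1 ≤ j)]
      simp only [Nat.add_sub_cancel]
    · rw [if_neg hij]
      dsimp only
      rw [if_pos (by omega : i ≤ j - 1)]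
      have h : j - 1 + 1 = j := by omega
      rw [h]

end CubicalAb

/-- for a cubical abelian group, the positive connection subcomplex
`posCon_*X` of the cubical alternating face map complex is acyclic (here
`posCon_{n+1}X = ⨆_{1 ≤ i ≤ n} range γ̄_i^0` and `posCon_0X = ⊥`). -/
theorem stmt12 (Y : CubicalAb)
    -- the maps induced on the quotients by the positive connections `γ_i^0`
    (γQ : ∀ n : ℕ, ℕ → (Y.CC n →+ Y.CC (n + 1)))
    (hγQ : ∀ n i : ℕ, 1 ≤ i → i ≤ n →
      (γQ n i).comp (QuotientAddGroup.mk' (Y.cDeg n)) =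
        (QuotientAddGroup.mk' (Y.cDeg (n + 1))).comp (Y.γ n 0 i))
    -- the differential of the cubical alternating face map complex
    (delQ : ∀ n : ℕ, Y.CC (n + 1) →+ Y.CC n)
    (hdelQ : ∀ n : ℕ, (delQ n).comp (QuotientAddGroup.mk' (Y.cDeg (n + 1))) =
      (QuotientAddGroup.mk' (Y.cDeg n)).comp (Y.δ n)) :
    -- every cycle of the positive connection subcomplex is a boundary of an element of it
    (∀ x ∈ (⊥ : AddSubgroup (Y.CC 0)),
      ∃ y ∈ ⨆ i ∈ Finset.Icc 1 0, AddMonoidHom.range (γQ 0 i), delQ 0 y = x) ∧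
    (∀ n : ℕ, ∀ x ∈ ⨆ i ∈ Finset.Icc 1 n, AddMonoidHom.range (γQ n i), delQ n x = 0 →
      ∃ y ∈ ⨆ i ∈ Finset.Icc 1 (n + 1), AddMonoidHom.range (γQ (n + 1) i),
        delQ (n + 1) y = x) := by
  constructor
  · rintro x hx
    simp only [AddSubgroup.mem_bot] at hx
    subst hx
    exact ⟨0, zero_mem _, map_zero _⟩
  · intro n
    suffices h : ∀ p, p ≤ n → ∀ x ∈ ⨆ i ∈ Finset.Icc 1 p, AddMonoidHom.range (γQ n i),
        delQ n x = 0 → ∃ y ∈ ⨆ i ∈ Finset.Icc 1 (n+1), AddMonoidHom.range (γQ (n+1) i),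
          delQ (n+1) y = x by
      exact fun x hx hc => h n le_rfl x hx hc
    intro p
    induction p with
    | zero =>
      intro _ x hx _
      have hbot : (⨆ i ∈ Finset.Icc 1 0, AddMonoidHom.range (γQ n i)) = ⊥ := by
        rw [Finset.Icc_eq_empty (by omega)]
        simp
      rw [hbot, AddSubgroup.mem_bot] at hx
      subst hx
      exact ⟨0, zero_mem _, map_zero _⟩
    | succ p ih =>
      intro hpn x hx hcyc
      obtain ⟨m, rfl⟩ : ∃ m, n = m + 1 := ⟨n - 1, by omega⟩
      have hdd : ∀ w : Y.CC (m+3), delQ (m+1) (delQ (m+2) w) = 0 := by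
        intro w
        obtain ⟨u, rfl⟩ := QuotientAddGroup.mk'_surjective (Y.cDeg (m+3)) w
        have h1 := DFunLike.congr_fun (hdelQ (m+2)) u
        simp only [AddMonoidHom.comp_apply] at h1
        rw [h1]
        have h2 := DFunLike.congr_fun (hdelQ (m+1)) (Y.δ (m+2) u)
        simp only [AddMonoidHom.comp_apply] at h2
        rw [h2, Y.deldel (m+1) u, map_zero]
      set π₁ := QuotientAddGroup.mk' (Y.cDeg (m+1)) with hπ₁
      set π₂ := QuotientAddGroup.mk' (Y.cDeg (m+2)) with hπ₂
      set Fp := ⨆ i ∈ Finset.Icc 1 p, AddMonoidHom.range (γQ (m+1) i) with hFp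
      have hmemF : ∀ i, 1 ≤ i → i ≤ p → ∀ v : Y.CC (m+1), γQ (m+1) i v ∈ Fp := by
        intro i h1 h2 v
        have hle : (γQ (m+1) i).range ≤ Fp :=
          le_iSup₂ (f := fun j (_ : j ∈ Finset.Icc 1 p) => (γQ (m+1) j).range) i
            (Finset.mem_Icc.mpr ⟨h1, h2⟩)
        exact hle ⟨v, rfl⟩
      have hEEle : ∀ v ∈ Y.EE m p, π₂ v ∈ Fp := by
        intro v hv
        rw [CubicalAb.EE] at hv
        obtain ⟨a, ha, b, hb, rfl⟩ := AddSubgroup.mem_sup.mp hv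
        rw [map_add]
        have hb0 : π₂ b = 0 := (QuotientAddGroup.eq_zero_iff b).mpr hb
        rw [hb0, add_zero]
        have hle : (⨆ i ∈ Finset.Icc 1 p, (Y.γ (m+1) 0 i).range) ≤ Fp.comap π₂ := by
          refine iSup₂_le fun i hi => ?_
          rintro _ ⟨v', rfl⟩
          rw [AddSubgroup.mem_comap]
          obtain ⟨h1, h2⟩ := Finset.mem_Icc.mp hi
          have hcomm := DFunLike.congr_fun (hγQ (m+1) i h1 (by omega)) v'
          simp only [AddMonoidHom.comp_apply] at hcomm
          rw [hπ₂, ← hcomm]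
          exact hmemF i h1 h2 _
        exact hle ha
      set R : Y.CC (m+2) →+ Y.CC (m+2) :=
        AddMonoidHom.id _ - ((-1:ℤ)^p) •
          ((delQ (m+2)).comp (γQ (m+2) (p+1)) + (γQ (m+1) (p+1)).comp (delQ (m+1))) with hR
      have hRF : R x ∈ Fp := by
        have hle : (⨆ i ∈ Finset.Icc 1 (p+1), AddMonoidHom.range (γQ (m+1) i))
            ≤ Fp.comap R := by
          refine iSup₂_le fun i hi => ?_
          rintro _ ⟨ξ, rfl⟩
          rw [AddSubgroup.mem_comap]
          obtain ⟨hi1, hi2⟩ := Finset.mem_Icc.mp hi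
          obtain ⟨z, rfl⟩ := QuotientAddGroup.mk'_surjective (Y.cDeg (m+1)) ξ
          have c1 : γQ (m+1) i (QuotientAddGroup.mk' (Y.cDeg (m+1)) z)
              = π₂ (Y.γ (m+1) 0 i z) := by
            have := DFunLike.congr_fun (hγQ (m+1) i hi1 (by omega)) z
            simpa [hπ₂] using this
          have c2 : γQ (m+2) (p+1) (π₂ (Y.γ (m+1) 0 i z))
              = QuotientAddGroup.mk' (Y.cDeg (m+3)) (Y.γ (m+2) 0 (p+1) (Y.γ (m+1) 0 i z)) := by
            have := DFunLike.congr_fun (hγQ (m+2) (p+1) (by omega) (by omega))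
              (Y.γ (m+1) 0 i z)
            simpa [hπ₂] using this
          have c3 : delQ (m+2) (QuotientAddGroup.mk' (Y.cDeg (m+3))
                (Y.γ (m+2) 0 (p+1) (Y.γ (m+1) 0 i z)))
              = π₂ (Y.δ (m+2) (Y.γ (m+2) 0 (p+1) (Y.γ (m+1) 0 i z))) := by
            have := DFunLike.congr_fun (hdelQ (m+2)) (Y.γ (m+2) 0 (p+1) (Y.γ (m+1) 0 i z))
            simpa [hπ₂] using this
          have c4 : delQ (m+1) (π₂ (Y.γ (m+1) 0 i z))
              = π₁ (Y.δ (m+1) (Y.γ (m+1) 0 i z)) := by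
            have := DFunLike.congr_fun (hdelQ (m+1)) (Y.γ (m+1) 0 i z)
            simpa [hπ₁, hπ₂] using this
          have c5 : γQ (m+1) (p+1) (π₁ (Y.δ (m+1) (Y.γ (m+1) 0 i z)))
              = π₂ (Y.γ (m+1) 0 (p+1) (Y.δ (m+1) (Y.γ (m+1) 0 i z))) := by
            have := DFunLike.congr_fun (hγQ (m+1) (p+1) (by omega) (by omega))
              (Y.δ (m+1) (Y.γ (m+1) 0 i z))
            simpa [hπ₁, hπ₂] using this
          have hRval : R (γQ (m+1) i (QuotientAddGroup.mk' (Y.cDeg (m+1)) z))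
              = π₂ (Y.γ (m+1) 0 i z
                  - ((-1:ℤ)^p) • (Y.δ (m+2) (Y.γ (m+2) 0 (p+1) (Y.γ (m+1) 0 i z))
                    + Y.γ (m+1) 0 (p+1) (Y.δ (m+1) (Y.γ (m+1) 0 i z)))) := by
            rw [hR]
            simp only [AddMonoidHom.sub_apply, AddMonoidHom.id_apply, AddMonoidHom.smul_apply,
              AddMonoidHom.add_apply, AddMonoidHom.comp_apply]
            rw [c1, c2, c3, c4, c5, map_sub, map_zsmul, map_add]
          rw [hRval]
          have hmx := Y.mainX m p i z hi1 (by omega) (by omega)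
          have hmem : Y.γ (m+1) 0 i z
              - ((-1:ℤ)^p) • (Y.δ (m+2) (Y.γ (m+2) 0 (p+1) (Y.γ (m+1) 0 i z))
                + Y.γ (m+1) 0 (p+1) (Y.δ (m+1) (Y.γ (m+1) 0 i z))) ∈ Y.EE m p := by
            have h2 := zsmul_mem hmx ((-1:ℤ)^p)
            have hsq : ((-1:ℤ)^p) • (((-1:ℤ)^p) • Y.γ (m+1) 0 i z)
                = Y.γ (m+1) 0 i z := by
              rw [smul_smul, ← pow_add, Even.neg_one_pow ⟨p, rfl⟩, one_smul]
            rw [smul_sub, hsq] at h2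
            have h3 := neg_mem h2
            rw [neg_sub] at h3
            exact h3
          exact hEEle _ hmem
        exact hle hx
      have hRx : R x = x - ((-1:ℤ)^p) • delQ (m+2) (γQ (m+2) (p+1) x) := by
        rw [hR]
        simp only [AddMonoidHom.sub_apply, AddMonoidHom.id_apply, AddMonoidHom.smul_apply,
          AddMonoidHom.add_apply, AddMonoidHom.comp_apply, hcyc, map_zero, add_zero]
      have hcyc' : delQ (m+1) (R x) = 0 := by
        rw [hRx, map_sub, hcyc, map_zsmul, hdd, smul_zero, sub_zero]
      obtain ⟨y2, hy2, hy2eq⟩ := ih (by omega) (R x) hRF hcyc'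
      refine ⟨((-1:ℤ)^p) • γQ (m+2) (p+1) x + y2, ?_, ?_⟩
      · refine add_mem (zsmul_mem ?_ _) hy2
        have hle : (γQ (m+2) (p+1)).range
            ≤ ⨆ i ∈ Finset.Icc 1 (m+2), (γQ (m+2) i).range :=
          le_iSup₂ (f := fun j (_ : j ∈ Finset.Icc 1 (m+2)) => (γQ (m+2) j).range) (p+1)
            (Finset.mem_Icc.mpr ⟨by omega, by omega⟩)
        exact hle ⟨x, rfl⟩
      · rw [map_add, map_zsmul, hy2eq, hRx]
        abel
end
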